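/- arXiv:2407.07679 — 3 statements merged into one kernel-verified Lean document; each statement's English description precedes it below -/
import Mathlib

section
/- For ℓ ≥ 2, set X^∘ := X^{(1)}X^{(2)}···X^{(ℓ)} (matrix product over D_ℓ). Then in D_ℓ: X^{(1)}_1 X^∘_2 = R_{21}^{−1} X^∘_2 R_{21} X^{(1)}_1 and X^∘_1 X^{(ℓ)}_2 = X^{(ℓ)}_2 R_{21} X^∘_1 R_{21}^{−1}; moreover, for ℓ ≥ 3 and any a ≠ 1, ℓ, X^{(a)}_1 X^∘_2 = X^∘_2 X^{(a)}_1. -/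
noncomputable section
open scoped BigOperators

namespace Rmatrix

/-- The base field `ℂ(q)`. -/
abbrev K : Type := RatFunc ℂ

/-- The parameter `q`. -/
def qq : K := RatFunc.X

/-- Row/column index type for `M_n ⊗ M_n`. -/
abbrev Idx (n : ℕ) := Fin n × Fin n

/-- The `R`-matrix
`R = q Σᵢ Eᵢᵢ⊗Eᵢᵢ + Σ_{i≠j} Eᵢᵢ⊗Eⱼⱼ + (q−q⁻¹) Σ_{i>j} Eⱼᵢ⊗Eᵢⱼ`. -/
def Rm (n : ℕ) : Matrix (Idx n) (Idx n) K := fun p r =>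
  (if p.1 = r.1 ∧ p.2 = r.2 ∧ p.1 = p.2 then qq else 0) +
  (if p.1 = r.1 ∧ p.2 = r.2 ∧ p.1 ≠ p.2 then 1 else 0) +
  (if p.1 = r.2 ∧ p.2 = r.1 ∧ p.1 < p.2 then qq - qq⁻¹ else 0)

/-- `R₂₁`, the `R`-matrix with the two tensor factors swapped. -/
def Rm21 (n : ℕ) : Matrix (Idx n) (Idx n) K := fun p r => Rm n (p.2, p.1) (r.2, r.1)

variable (n : ℕ) (A : Type) [Ring A] [Algebra K A]

/-- A scalar matrix viewed as a matrix with entries in the `K`-algebra `A`. -/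
def ext (M : Matrix (Idx n) (Idx n) K) : Matrix (Idx n) (Idx n) A :=
  M.map (algebraMap K A)

/-- `M₁ = Σ E_ij ⊗ I ⊗ m_ij`, the matrix `M` placed in the first tensor factor. -/
def m1 (M : Matrix (Fin n) (Fin n) A) : Matrix (Idx n) (Idx n) A :=
  fun p r => if p.2 = r.2 then M p.1 r.1 else 0

/-- `M₂ = Σ I ⊗ E_ij ⊗ m_ij`, the matrix `M` placed in the second tensor factor. -/
def m2 (M : Matrix (Fin n) (Fin n) A) : Matrix (Idx n) (Idx n) A :=
  fun p r => if p.1 = r.1 then M p.2 r.2 else 0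

/-- `Ω = Σ_{ij} E_ij ⊗ E_ji ⊗ 1`. -/
def Om : Matrix (Idx n) (Idx n) A := fun p r => if p.1 = r.2 ∧ p.2 = r.1 then 1 else 0

end Rmatrix

namespace Dell

open Rmatrix

variable (ℓ n : ℕ)

/-- Generators `x_ij^{(a)}`, `∂_ij^{(a)}` of `D_ℓ`, for `a ∈ ℤ/ℓℤ`. -/
inductive Gen (ℓ n : ℕ) : Type
  | x : ZMod ℓ → Fin n → Fin n → Gen ℓ n
  | d : ZMod ℓ → Fin n → Fin n → Gen ℓ n

abbrev F (ℓ n : ℕ) := FreeAlgebra K (Gen ℓ n)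

/-- The matrix `X^{(a)}` of generators, over the free algebra. -/
def XF (a : ZMod ℓ) : Matrix (Fin n) (Fin n) (F ℓ n) :=
  fun i j => FreeAlgebra.ι K (Gen.x a i j)

/-- The matrix `D^{(a)}` of generators, over the free algebra. -/
def DF (a : ZMod ℓ) : Matrix (Fin n) (Fin n) (F ℓ n) :=
  fun i j => FreeAlgebra.ι K (Gen.d a i j)

/-- `R` over the free algebra. -/
def Rf : Matrix (Idx n) (Idx n) (F ℓ n) := ext n (F ℓ n) (Rm n)
/-- `R₂₁` over the free algebra. -/
def R21f : Matrix (Idx n) (Idx n) (F ℓ n) := ext n (F ℓ n) (Rm21 n)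
/-- `R⁻¹` over the free algebra. -/
def Rif : Matrix (Idx n) (Idx n) (F ℓ n) := ext n (F ℓ n) (Rm n)⁻¹
/-- `R₂₁⁻¹` over the free algebra. -/
def R21if : Matrix (Idx n) (Idx n) (F ℓ n) := ext n (F ℓ n) (Rm21 n)⁻¹
/-- `Ω` over the free algebra. -/
def Omf : Matrix (Idx n) (Idx n) (F ℓ n) := Om n (F ℓ n)

/-- `M₁` over the free algebra. -/
def o1 (M : Matrix (Fin n) (Fin n) (F ℓ n)) : Matrix (Idx n) (Idx n) (F ℓ n) :=
  m1 n (F ℓ n) M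
/-- `M₂` over the free algebra. -/
def o2 (M : Matrix (Fin n) (Fin n) (F ℓ n)) : Matrix (Idx n) (Idx n) (F ℓ n) :=
  m2 n (F ℓ n) M

/-- The defining relations of the algebra `D_ℓ` of quantum differential operators on the
framed cyclic quiver with `ℓ ≥ 2` vertices (including the replacement relations for
`ℓ = 2`). -/
inductive Rel (ℓ n : ℕ) : F ℓ n → F ℓ n → Prop
  | xaa (a : ZMod ℓ) (p r : Idx n) :
      Rel ℓ n ((R21f ℓ n * o1 ℓ n (XF ℓ n a) * o2 ℓ n (XF ℓ n a)) p r)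
              ((o2 ℓ n (XF ℓ n a) * o1 ℓ n (XF ℓ n a) * Rf ℓ n) p r)
  | daa (a : ZMod ℓ) (p r : Idx n) :
      Rel ℓ n ((R21f ℓ n * o1 ℓ n (DF ℓ n a) * o2 ℓ n (DF ℓ n a)) p r)
              ((o2 ℓ n (DF ℓ n a) * o1 ℓ n (DF ℓ n a) * Rf ℓ n) p r)
  | dxa (a : ZMod ℓ) (p r : Idx n) :
      Rel ℓ n ((o2 ℓ n (DF ℓ n a) * Rif ℓ n * o1 ℓ n (XF ℓ n a)) p r)
              ((o1 ℓ n (XF ℓ n a) * Rf ℓ n * o2 ℓ n (DF ℓ n a) + (qq - qq⁻¹) • Omf ℓ n) p r)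
  | xxadj (h : 3 ≤ ℓ) (a : ZMod ℓ) (p r : Idx n) :
      Rel ℓ n ((o1 ℓ n (XF ℓ n a) * o2 ℓ n (XF ℓ n (a - 1))) p r)
              ((o2 ℓ n (XF ℓ n (a - 1)) * R21f ℓ n * o1 ℓ n (XF ℓ n a)) p r)
  | xxcom (a b : ZMod ℓ) (h : b ≠ a ∧ b ≠ a + 1 ∧ b ≠ a - 1) (p r : Idx n) :
      Rel ℓ n ((o1 ℓ n (XF ℓ n a) * o2 ℓ n (XF ℓ n b)) p r)
              ((o2 ℓ n (XF ℓ n b) * o1 ℓ n (XF ℓ n a)) p r)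
  | ddadj (h : 3 ≤ ℓ) (a : ZMod ℓ) (p r : Idx n) :
      Rel ℓ n ((o1 ℓ n (DF ℓ n a) * o2 ℓ n (DF ℓ n (a + 1))) p r)
              ((o2 ℓ n (DF ℓ n (a + 1)) * Rif ℓ n * o1 ℓ n (DF ℓ n a)) p r)
  | ddcom (a b : ZMod ℓ) (h : b ≠ a ∧ b ≠ a + 1 ∧ b ≠ a - 1) (p r : Idx n) :
      Rel ℓ n ((o1 ℓ n (DF ℓ n a) * o2 ℓ n (DF ℓ n b)) p r)
              ((o2 ℓ n (DF ℓ n b) * o1 ℓ n (DF ℓ n a)) p r)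
  | dxadj1 (h : 3 ≤ ℓ) (a : ZMod ℓ) (p r : Idx n) :
      Rel ℓ n ((o1 ℓ n (DF ℓ n a) * o2 ℓ n (XF ℓ n (a + 1))) p r)
              ((Rf ℓ n * o2 ℓ n (XF ℓ n (a + 1)) * o1 ℓ n (DF ℓ n a)) p r)
  | dxadj2 (h : 3 ≤ ℓ) (a : ZMod ℓ) (p r : Idx n) :
      Rel ℓ n ((o1 ℓ n (DF ℓ n a) * o2 ℓ n (XF ℓ n (a - 1))) p r)
              ((o2 ℓ n (XF ℓ n (a - 1)) * o1 ℓ n (DF ℓ n a) * R21if ℓ n) p r)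
  | dxcom (a b : ZMod ℓ) (h : b ≠ a ∧ b ≠ a + 1 ∧ b ≠ a - 1) (p r : Idx n) :
      Rel ℓ n ((o1 ℓ n (DF ℓ n a) * o2 ℓ n (XF ℓ n b)) p r)
              ((o2 ℓ n (XF ℓ n b) * o1 ℓ n (DF ℓ n a)) p r)
  | xxadj2 (h : ℓ = 2) (p r : Idx n) :
      Rel ℓ n ((o1 ℓ n (XF ℓ n (1 + 1)) * Rf ℓ n * o2 ℓ n (XF ℓ n 1)) p r)
              ((o2 ℓ n (XF ℓ n 1) * R21f ℓ n * o1 ℓ n (XF ℓ n (1 + 1))) p r)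
  | ddadj2 (h : ℓ = 2) (p r : Idx n) :
      Rel ℓ n ((o1 ℓ n (DF ℓ n 1) * R21if ℓ n * o2 ℓ n (DF ℓ n (1 + 1))) p r)
              ((o2 ℓ n (DF ℓ n (1 + 1)) * Rif ℓ n * o1 ℓ n (DF ℓ n 1)) p r)
  | dxadj2' (h : ℓ = 2) (a : ZMod ℓ) (p r : Idx n) :
      Rel ℓ n ((o1 ℓ n (DF ℓ n a) * o2 ℓ n (XF ℓ n (a + 1))) p r)
              ((R21if ℓ n * o2 ℓ n (XF ℓ n (a + 1)) * o1 ℓ n (DF ℓ n a) * R21if ℓ n) p r)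

/-- The algebra `D_ℓ` of quantum differential operators on the framed cyclic quiver. -/
abbrev Dl (ℓ n : ℕ) := RingQuot (Rel ℓ n)

/-- The matrix `X^{(a)}` over `D_ℓ`. -/
def XM (a : ZMod ℓ) : Matrix (Fin n) (Fin n) (Dl ℓ n) :=
  fun i j => RingQuot.mkAlgHom K (Rel ℓ n) (XF ℓ n a i j)

/-- The matrix `D^{(a)}` over `D_ℓ`. -/
def DM (a : ZMod ℓ) : Matrix (Fin n) (Fin n) (Dl ℓ n) :=
  fun i j => RingQuot.mkAlgHom K (Rel ℓ n) (DF ℓ n a i j)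

/-- `R` over `D_ℓ`. -/
def Ra : Matrix (Idx n) (Idx n) (Dl ℓ n) := ext n (Dl ℓ n) (Rm n)
/-- `R₂₁` over `D_ℓ`. -/
def R21a : Matrix (Idx n) (Idx n) (Dl ℓ n) := ext n (Dl ℓ n) (Rm21 n)
/-- `R⁻¹` over `D_ℓ`. -/
def Ria : Matrix (Idx n) (Idx n) (Dl ℓ n) := ext n (Dl ℓ n) (Rm n)⁻¹
/-- `R₂₁⁻¹` over `D_ℓ`. -/
def R21ia : Matrix (Idx n) (Idx n) (Dl ℓ n) := ext n (Dl ℓ n) (Rm21 n)⁻¹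

/-- `M₁` over `D_ℓ`. -/
def q1 (M : Matrix (Fin n) (Fin n) (Dl ℓ n)) : Matrix (Idx n) (Idx n) (Dl ℓ n) :=
  m1 n (Dl ℓ n) M
/-- `M₂` over `D_ℓ`. -/
def q2 (M : Matrix (Fin n) (Fin n) (Dl ℓ n)) : Matrix (Idx n) (Idx n) (Dl ℓ n) :=
  m2 n (Dl ℓ n) M

/-- `X^∘ := X^{(1)} X^{(2)} ⋯ X^{(ℓ)}`. -/
def Xcirc : Matrix (Fin n) (Fin n) (Dl ℓ n) :=
  ((List.range ℓ).map fun k => XM ℓ n ((k : ZMod ℓ) + 1)).prod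

/-- `^LỸ^{(a)} := I + X^{(a)} D^{(a)}`. -/
def LY (a : ZMod ℓ) : Matrix (Fin n) (Fin n) (Dl ℓ n) := 1 + XM ℓ n a * DM ℓ n a

/-- `^RY^{(a)} := I + D^{(a)} X^{(a)}`. -/
def RYa (a : ZMod ℓ) : Matrix (Fin n) (Fin n) (Dl ℓ n) := 1 + DM ℓ n a * XM ℓ n a

end Dell

namespace Aux

open Rmatrix Dell

set_option linter.unusedSectionVars false

lemma qq_ne_zero : qq ≠ 0 := RatFunc.X_ne_zero
lemma qq_mul_inv : qq * qq⁻¹ = 1 := mul_inv_cancel₀ qq_ne_zero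

/-- The explicit inverse of `Rm`. -/
def RmInv (n : ℕ) : Matrix (Idx n) (Idx n) K := fun p r =>
  (if p.1 = r.1 ∧ p.2 = r.2 ∧ p.1 = p.2 then qq⁻¹ else 0) +
  (if p.1 = r.1 ∧ p.2 = r.2 ∧ p.1 ≠ p.2 then 1 else 0) +
  (if p.1 = r.2 ∧ p.2 = r.1 ∧ p.1 < p.2 then -(qq - qq⁻¹) else 0)

lemma sum_pin {α : Type} [Fintype α] [DecidableEq α] (t : α) (P : α → Prop) [DecidablePred P]
    (hP : ∀ s, P s → s = t) (c : K) (g : α → K) :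
    ∑ s, (if P s then c else 0) * g s = if P t then c * g t else 0 := by
  rw [Finset.sum_eq_single t]
  · split_ifs <;> simp
  · intro b _ hb; rw [if_neg (fun hc => hb (hP b hc)), zero_mul]
  · simp

lemma mul_RmInv (n : ℕ) : Rm n * RmInv n = 1 := by
  ext p r
  rw [Matrix.mul_apply]
  simp only [Rm, add_mul]
  rw [Finset.sum_add_distrib, Finset.sum_add_distrib,
    sum_pin p _ (fun s hs => Prod.ext hs.1.symm hs.2.1.symm),
    sum_pin p _ (fun s hs => Prod.ext hs.1.symm hs.2.1.symm),
    sum_pin (p.2, p.1) _ (fun s (hs : p.1 = s.2 ∧ p.2 = s.1 ∧ p.1 < p.2) =>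
      Prod.ext hs.2.1.symm hs.1.symm)]
  obtain ⟨p1, p2⟩ := p
  obtain ⟨r1, r2⟩ := r
  rcases lt_trichotomy p1 p2 with h | h | h
  · by_cases e2 : p1 = r2 ∧ p2 = r1
    · obtain ⟨a, b⟩ := e2; subst a; subst b
      simp [RmInv, Matrix.one_apply, Prod.ext_iff, h, h.ne, h.ne', lt_irrefl, not_lt_of_gt h]
    · by_cases e1 : p1 = r1 ∧ p2 = r2
      · obtain ⟨a, b⟩ := e1; subst a; subst b
        simp [RmInv, Matrix.one_apply, Prod.ext_iff, h, h.ne, h.ne', lt_irrefl, not_lt_of_gt h]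
      · simp [RmInv, Matrix.one_apply, Prod.ext_iff, h, h.ne, h.ne', e1, e2]
        right
        rw [if_neg (fun hc => e2 ⟨hc.2, hc.1⟩),
          if_neg (fun hc => absurd hc.2.2 (lt_asymm h))]
        simp
  · subst h
    by_cases e1 : p1 = r1 ∧ p1 = r2
    · obtain ⟨a, b⟩ := e1; subst a; subst b
      simp [RmInv, Matrix.one_apply, Prod.ext_iff, qq_mul_inv]
    · simp [RmInv, Matrix.one_apply, Prod.ext_iff, e1]
  · by_cases e1 : p1 = r1 ∧ p2 = r2
    · obtain ⟨a, b⟩ := e1; subst a; subst b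
      simp [RmInv, Matrix.one_apply, Prod.ext_iff, h, h.ne, h.ne', lt_irrefl, not_lt_of_gt h]
    · simp [RmInv, Matrix.one_apply, Prod.ext_iff, h, h.ne, h.ne', not_lt_of_gt h, e1]

def swapE (n : ℕ) : Idx n ≃ Idx n := Equiv.prodComm _ _

lemma Rm21_eq (n : ℕ) : Rm21 n = (Rm n).submatrix (swapE n) (swapE n) := rfl

lemma mul_Rm21Inv (n : ℕ) :
    Rm21 n * (RmInv n).submatrix (swapE n) (swapE n) = 1 := by
  rw [Rm21_eq, Matrix.submatrix_mul_equiv, mul_RmInv, Matrix.submatrix_one_equiv]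

lemma Rm_inv_eq (n : ℕ) : (Rm n)⁻¹ = RmInv n := Matrix.inv_eq_right_inv (mul_RmInv n)
lemma Rm21_inv_eq (n : ℕ) : (Rm21 n)⁻¹ = (RmInv n).submatrix (swapE n) (swapE n) :=
  Matrix.inv_eq_right_inv (mul_Rm21Inv n)
lemma Rm_mul_inv (n : ℕ) : Rm n * (Rm n)⁻¹ = 1 := by rw [Rm_inv_eq]; exact mul_RmInv n
lemma Rm_inv_mul (n : ℕ) : (Rm n)⁻¹ * Rm n = 1 := mul_eq_one_comm.mp (Rm_mul_inv n)
lemma Rm21_mul_inv (n : ℕ) : Rm21 n * (Rm21 n)⁻¹ = 1 := by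
  rw [Rm21_inv_eq]; exact mul_Rm21Inv n
lemma Rm21_inv_mul (n : ℕ) : (Rm21 n)⁻¹ * Rm21 n = 1 :=
  mul_eq_one_comm.mp (Rm21_mul_inv n)

section Homs

variable (n : ℕ) (A : Type) [Ring A] [Algebra K A]

lemma ext_mul (M N : Matrix (Idx n) (Idx n) K) :
    ext n A (M * N) = ext n A M * ext n A N := by
  ext p r
  simp [ext, Matrix.mul_apply, map_sum]

lemma ext_one : ext n A 1 = 1 :=
  Matrix.map_one _ (map_zero _) (map_one _)

lemma m2_mul (M N : Matrix (Fin n) (Fin n) A) :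
    m2 n A (M * N) = m2 n A M * m2 n A N := by
  ext p r
  simp only [m2, Matrix.mul_apply, Fintype.sum_prod_type, ite_mul, mul_ite, zero_mul,
    mul_zero]
  rw [Finset.sum_comm]
  simp [Finset.sum_ite_eq, Finset.sum_ite_eq']

lemma m1_mul (M N : Matrix (Fin n) (Fin n) A) :
    m1 n A (M * N) = m1 n A M * m1 n A N := by
  ext p r
  simp only [m1, Matrix.mul_apply, Fintype.sum_prod_type, ite_mul, mul_ite, zero_mul,
    mul_zero]
  simp [Finset.sum_ite_eq, Finset.sum_ite_eq']

lemma m2_one : m2 n A 1 = 1 := by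
  ext p r
  simp [m2, Matrix.one_apply, Prod.ext_iff, ite_and]

lemma m2_list_prod (L : List (Matrix (Fin n) (Fin n) A)) :
    m2 n A L.prod = (L.map (m2 n A)).prod := by
  induction L with
  | nil => simpa using m2_one n A
  | cons h t ih => simp [List.prod_cons, m2_mul, ih]

lemma m1_one : m1 n A 1 = 1 := by
  ext p r
  simp [m1, Matrix.one_apply, Prod.ext_iff, ite_and]
  split_ifs <;> simp_all

lemma m1_list_prod (L : List (Matrix (Fin n) (Fin n) A)) :
    m1 n A L.prod = (L.map (m1 n A)).prod := by
  induction L with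
  | nil => simpa using m1_one n A
  | cons h t ih => simp [List.prod_cons, m1_mul, ih]

end Homs

section Transfer

variable (ℓ n : ℕ)

/-- The quotient map as an algebra hom. -/
abbrev φh (ℓ n : ℕ) : F ℓ n →ₐ[K] Dl ℓ n := RingQuot.mkAlgHom K (Rel ℓ n)

lemma map_mulM (M N : Matrix (Idx n) (Idx n) (F ℓ n)) :
    (M * N).map (φh ℓ n) = M.map (φh ℓ n) * N.map (φh ℓ n) := by
  ext p r
  simp [Matrix.mul_apply, map_sum]

lemma matrel {M N : Matrix (Idx n) (Idx n) (F ℓ n)}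
    (h : ∀ p r, Rel ℓ n (M p r) (N p r)) : M.map (φh ℓ n) = N.map (φh ℓ n) := by
  ext p r
  exact RingQuot.mkAlgHom_rel _ (h p r)

lemma map_o1 (M : Matrix (Fin n) (Fin n) (F ℓ n)) :
    (o1 ℓ n M).map (φh ℓ n) = q1 ℓ n (M.map (φh ℓ n)) := by
  ext p r
  simp [o1, q1, m1, Matrix.map_apply, apply_ite (φh ℓ n)]

lemma map_o2 (M : Matrix (Fin n) (Fin n) (F ℓ n)) :
    (o2 ℓ n M).map (φh ℓ n) = q2 ℓ n (M.map (φh ℓ n)) := by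
  ext p r
  simp [o2, q2, m2, Matrix.map_apply, apply_ite (φh ℓ n)]

lemma map_XF (a : ZMod ℓ) : (XF ℓ n a).map (φh ℓ n) = XM ℓ n a := rfl

lemma map_ext (M : Matrix (Idx n) (Idx n) K) :
    (ext n (F ℓ n) M).map (φh ℓ n) = ext n (Dl ℓ n) M := by
  ext p r
  exact (φh ℓ n).commutes _

/-- `X^{(a)}₁` over `D_ℓ`. -/
def Z (a : ZMod ℓ) : Matrix (Idx n) (Idx n) (Dl ℓ n) := q1 ℓ n (XM ℓ n a)
/-- `X^{(a)}₂` over `D_ℓ`. -/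
def Yv (a : ZMod ℓ) : Matrix (Idx n) (Idx n) (Dl ℓ n) := q2 ℓ n (XM ℓ n a)

lemma rel1 (a : ZMod ℓ) :
    R21a ℓ n * Z ℓ n a * Yv ℓ n a = Yv ℓ n a * Z ℓ n a * Ra ℓ n := by
  have h := matrel ℓ n (fun p r => Rel.xaa a p r)
  simp only [R21f, Rf] at h
  simp only [map_mulM, map_o1, map_o2, map_ext, map_XF] at h
  simpa only [Z, Yv, R21a, Ra] using h

lemma rel2 (h3 : 3 ≤ ℓ) (a : ZMod ℓ) :
    Z ℓ n a * Yv ℓ n (a - 1) = Yv ℓ n (a - 1) * R21a ℓ n * Z ℓ n a := by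
  have h := matrel ℓ n (fun p r => Rel.xxadj h3 a p r)
  simp only [R21f] at h
  simp only [map_mulM, map_o1, map_o2, map_ext, map_XF] at h
  simpa only [Z, Yv, R21a] using h

lemma rel3 (a b : ZMod ℓ) (h : b ≠ a ∧ b ≠ a + 1 ∧ b ≠ a - 1) :
    Z ℓ n a * Yv ℓ n b = Yv ℓ n b * Z ℓ n a := by
  have h' := matrel ℓ n (fun p r => Rel.xxcom a b h p r)
  simp only [map_mulM, map_o1, map_o2, map_ext, map_XF] at h'
  simpa only [Z, Yv] using h'

lemma rel4 (h2 : ℓ = 2) :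
    Z ℓ n (1 + 1) * Ra ℓ n * Yv ℓ n 1 = Yv ℓ n 1 * R21a ℓ n * Z ℓ n (1 + 1) := by
  have h := matrel ℓ n (fun p r => Rel.xxadj2 h2 p r)
  simp only [Rf, R21f] at h
  simp only [map_mulM, map_o1, map_o2, map_ext, map_XF] at h
  simpa only [Z, Yv, Ra, R21a] using h

/-- Flip of the two tensor factors, over `D_ℓ`. -/
def flD (M : Matrix (Idx n) (Idx n) (Dl ℓ n)) : Matrix (Idx n) (Idx n) (Dl ℓ n) :=
  M.submatrix (swapE n) (swapE n)

lemma flD_mul (M N : Matrix (Idx n) (Idx n) (Dl ℓ n)) :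
    flD ℓ n (M * N) = flD ℓ n M * flD ℓ n N :=
  (Matrix.submatrix_mul_equiv M N _ _ _).symm

lemma flD_q1 (M : Matrix (Fin n) (Fin n) (Dl ℓ n)) : flD ℓ n (q1 ℓ n M) = q2 ℓ n M := rfl
lemma flD_q2 (M : Matrix (Fin n) (Fin n) (Dl ℓ n)) : flD ℓ n (q2 ℓ n M) = q1 ℓ n M := rfl
lemma flD_Ra : flD ℓ n (Ra ℓ n) = R21a ℓ n := rfl
lemma flD_R21a : flD ℓ n (R21a ℓ n) = Ra ℓ n := rfl
lemma flD_Z (a : ZMod ℓ) : flD ℓ n (Z ℓ n a) = Yv ℓ n a := rfl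
lemma flD_Yv (a : ZMod ℓ) : flD ℓ n (Yv ℓ n a) = Z ℓ n a := rfl

lemma rel1' (a : ZMod ℓ) :
    Ra ℓ n * Yv ℓ n a * Z ℓ n a = Z ℓ n a * Yv ℓ n a * R21a ℓ n := by
  have h := congrArg (flD ℓ n) (rel1 ℓ n a)
  simpa only [flD_mul, flD_Z, flD_Yv, flD_Ra, flD_R21a] using h

lemma rel2' (h3 : 3 ≤ ℓ) (a : ZMod ℓ) :
    Yv ℓ n a * Z ℓ n (a - 1) = Z ℓ n (a - 1) * Ra ℓ n * Yv ℓ n a := by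
  have h := congrArg (flD ℓ n) (rel2 ℓ n h3 a)
  simpa only [flD_mul, flD_Z, flD_Yv, flD_Ra, flD_R21a] using h

lemma rel4' (h2 : ℓ = 2) :
    Yv ℓ n (1 + 1) * R21a ℓ n * Z ℓ n 1 = Z ℓ n 1 * Ra ℓ n * Yv ℓ n (1 + 1) := by
  have h := congrArg (flD ℓ n) (rel4 ℓ n h2)
  simpa only [flD_mul, flD_Z, flD_Yv, flD_Ra, flD_R21a] using h

lemma R21a_mul_R21ia : R21a ℓ n * R21ia ℓ n = 1 := by
  rw [R21a, R21ia, ← ext_mul, Rm21_mul_inv, ext_one]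

lemma R21ia_mul_R21a : R21ia ℓ n * R21a ℓ n = 1 := by
  rw [R21a, R21ia, ← ext_mul, Rm21_inv_mul, ext_one]

lemma Ra_mul_Ria : Ra ℓ n * Ria ℓ n = 1 := by
  rw [Ra, Ria, ← ext_mul, Rm_mul_inv, ext_one]

lemma Ria_mul_Ra : Ria ℓ n * Ra ℓ n = 1 := by
  rw [Ra, Ria, ← ext_mul, Rm_inv_mul, ext_one]

lemma R21ia_R21a_W (W : Matrix (Idx n) (Idx n) (Dl ℓ n)) :
    R21ia ℓ n * (R21a ℓ n * W) = W := by
  rw [← mul_assoc, R21ia_mul_R21a, one_mul]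

lemma R21a_R21ia_W (W : Matrix (Idx n) (Idx n) (Dl ℓ n)) :
    R21a ℓ n * (R21ia ℓ n * W) = W := by
  rw [← mul_assoc, R21a_mul_R21ia, one_mul]

end Transfer

section Waux

variable (ℓ n : ℕ)

lemma cast_ne_cast {m x y : ℕ} (hx : x ≤ m) (hy : y ≤ m) (h1 : x ≠ y)
    (h2 : ¬(x = 0 ∧ y = m)) (h3 : ¬(x = m ∧ y = 0)) : (x : ZMod m) ≠ (y : ZMod m) := by
  have hm : 0 < m := by omega
  rw [Ne, ZMod.natCast_eq_natCast_iff']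
  have ex : x % m = if x = m then 0 else x := by
    split_ifs with h
    · simp [h]
    · exact Nat.mod_eq_of_lt (by omega)
  have ey : y % m = if y = m then 0 else y := by
    split_ifs with h
    · simp [h]
    · exact Nat.mod_eq_of_lt (by omega)
  rw [ex, ey]
  split_ifs <;> omega

lemma comm_W {R : Type*} [Ring R] {X M : R} (h : X * M = M * X) (W : R) :
    X * (M * W) = M * (X * W) := by
  rw [← mul_assoc, h, mul_assoc]

lemma cast_pred_add_one (hl : 1 ≤ ℓ) : ((ℓ - 1 : ℕ) : ZMod ℓ) + 1 = 0 := by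
  rw [Nat.cast_sub hl, Nat.cast_one, ZMod.natCast_self]
  ring

/-- `W1`: `Zₐ (Yₐ W) = R₂₁⁻¹ (Yₐ (Zₐ (R W)))`. -/
lemma W1 (a : ZMod ℓ) (W : Matrix (Idx n) (Idx n) (Dl ℓ n)) :
    Z ℓ n a * (Yv ℓ n a * W)
      = R21ia ℓ n * (Yv ℓ n a * (Z ℓ n a * (Ra ℓ n * W))) := by
  have h := congrArg (fun M => R21ia ℓ n * (M * W)) (rel1 ℓ n a)
  simp only [mul_assoc] at h
  rw [R21ia_R21a_W] at h
  exact h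

/-- `W1L`: `R₂₁ (Zₐ (Yₐ W)) = Yₐ (Zₐ (R W))`. -/
lemma W1L (a : ZMod ℓ) (W : Matrix (Idx n) (Idx n) (Dl ℓ n)) :
    R21a ℓ n * (Z ℓ n a * (Yv ℓ n a * W))
      = Yv ℓ n a * (Z ℓ n a * (Ra ℓ n * W)) := by
  simpa only [mul_assoc] using congrArg (· * W) (rel1 ℓ n a)

/-- `T1'`: `R (Yₐ Zₐ) = Zₐ (Yₐ R₂₁)`. -/
lemma T1' (a : ZMod ℓ) :
    Ra ℓ n * (Yv ℓ n a * Z ℓ n a) = Z ℓ n a * (Yv ℓ n a * R21a ℓ n) := by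
  simpa only [mul_assoc] using rel1' ℓ n a

/-- `W2`: `Zₐ (Y_{a-1} W) = Y_{a-1} (R₂₁ (Zₐ W))`. -/
lemma W2 (h3 : 3 ≤ ℓ) (a : ZMod ℓ) (W : Matrix (Idx n) (Idx n) (Dl ℓ n)) :
    Z ℓ n a * (Yv ℓ n (a - 1) * W)
      = Yv ℓ n (a - 1) * (R21a ℓ n * (Z ℓ n a * W)) := by
  simpa only [mul_assoc] using congrArg (· * W) (rel2 ℓ n h3 a)

lemma T2 (h3 : 3 ≤ ℓ) (a : ZMod ℓ) :
    Z ℓ n a * Yv ℓ n (a - 1) = Yv ℓ n (a - 1) * (R21a ℓ n * Z ℓ n a) := by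
  simpa only [mul_assoc] using rel2 ℓ n h3 a

/-- `W2'`: `Yₐ (Z_{a-1} W) = Z_{a-1} (R (Yₐ W))`. -/
lemma W2' (h3 : 3 ≤ ℓ) (a : ZMod ℓ) (W : Matrix (Idx n) (Idx n) (Dl ℓ n)) :
    Yv ℓ n a * (Z ℓ n (a - 1) * W)
      = Z ℓ n (a - 1) * (Ra ℓ n * (Yv ℓ n a * W)) := by
  simpa only [mul_assoc] using congrArg (· * W) (rel2' ℓ n h3 a)

lemma T2' (h3 : 3 ≤ ℓ) (a : ZMod ℓ) :
    Yv ℓ n a * Z ℓ n (a - 1) = Z ℓ n (a - 1) * (Ra ℓ n * Yv ℓ n a) := by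
  simpa only [mul_assoc] using rel2' ℓ n h3 a

/-- `W4'`: the `ℓ = 2` analogue of `W2'`. -/
lemma W4' (h2 : ℓ = 2) (W : Matrix (Idx n) (Idx n) (Dl ℓ n)) :
    Yv ℓ n (1 + 1) * (R21a ℓ n * (Z ℓ n 1 * W))
      = Z ℓ n 1 * (Ra ℓ n * (Yv ℓ n (1 + 1) * W)) := by
  simpa only [mul_assoc] using congrArg (· * W) (rel4' ℓ n h2)

lemma T4' (h2 : ℓ = 2) :
    Yv ℓ n (1 + 1) * (R21a ℓ n * Z ℓ n 1)
      = Z ℓ n 1 * (Ra ℓ n * Yv ℓ n (1 + 1)) := by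
  simpa only [mul_assoc] using rel4' ℓ n h2

lemma q2_Xcirc : q2 ℓ n (Xcirc ℓ n)
    = ((List.range ℓ).map (fun k : ℕ => Yv ℓ n ((k : ZMod ℓ) + 1))).prod := by
  rw [Xcirc, show q2 ℓ n = m2 n (Dl ℓ n) from rfl, m2_list_prod]
  congr 1
  simp only [bind_pure_comp, List.map_eq_map, List.map_map]
  rfl

lemma q1_Xcirc : q1 ℓ n (Xcirc ℓ n)
    = ((List.range ℓ).map (fun k : ℕ => Z ℓ n ((k : ZMod ℓ) + 1))).prod := by
  rw [Xcirc, show q1 ℓ n = m1 n (Dl ℓ n) from rfl, m1_list_prod]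
  congr 1
  simp only [bind_pure_comp, List.map_eq_map, List.map_map]
  rfl

lemma decompY3 (h3 : 3 ≤ ℓ) :
    ((List.range ℓ).map (fun k : ℕ => Yv ℓ n ((k : ZMod ℓ) + 1))).prod
      = Yv ℓ n (((0:ℕ) : ZMod ℓ) + 1) * (Yv ℓ n (((1:ℕ) : ZMod ℓ) + 1) *
          ((((List.range (ℓ-3)).map (fun k : ℕ => Yv ℓ n (((2+k : ℕ) : ZMod ℓ) + 1))).prod)
            * Yv ℓ n (((2+(ℓ-3) : ℕ) : ZMod ℓ) + 1))) := by
  have h1 : List.range ℓ = List.range 2 ++ ((List.range (ℓ-3)).map (2 + ·) ++ [2+(ℓ-3)]) :=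
    calc List.range ℓ = List.range 2 ++ (List.range ((ℓ-3)+1)).map (2 + ·) := by
          rw [← List.range_add]; congr 1; omega
      _ = _ := by
          rw [show List.range ((ℓ-3)+1) = List.range (ℓ-3) ++ [ℓ-3] from List.range_succ,
            List.map_append]
          rfl
  rw [h1, show List.range 2 = [0, 1] from rfl]
  simp only [List.map_append, List.prod_append, List.map_map, List.map_cons, List.map_nil,
    List.prod_cons, List.prod_nil, Function.comp, Function.comp_def, mul_one, one_mul, mul_assoc]

lemma decompY2 (h2 : ℓ = 2) :
    ((List.range ℓ).map (fun k : ℕ => Yv ℓ n ((k : ZMod ℓ) + 1))).prod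
      = Yv ℓ n 1 * Yv ℓ n (1 + 1) := by
  subst h2
  show Yv 2 n (((0:ℕ) : ZMod 2) + 1) * (Yv 2 n (((1:ℕ) : ZMod 2) + 1) * 1)
      = Yv 2 n 1 * Yv 2 n (1 + 1)
  rw [show (((0:ℕ) : ZMod 2) + 1) = 1 by decide, show (((1:ℕ) : ZMod 2) + 1) = 1 + 1 by decide,
    mul_one]

lemma decompZ3 (h3 : 3 ≤ ℓ) :
    ((List.range ℓ).map (fun k : ℕ => Z ℓ n ((k : ZMod ℓ) + 1))).prod
      = Z ℓ n (((0:ℕ) : ZMod ℓ) + 1) *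
          ((((List.range (ℓ-3)).map (fun k : ℕ => Z ℓ n (((1+k : ℕ) : ZMod ℓ) + 1))).prod)
            * (Z ℓ n (((1+(ℓ-3) : ℕ) : ZMod ℓ) + 1)
              * Z ℓ n (((1+((ℓ-3)+1) : ℕ) : ZMod ℓ) + 1))) := by
  have h1 : List.range ℓ
      = List.range 1 ++ (((List.range (ℓ-3)).map (1 + ·) ++ [1+(ℓ-3)]) ++ [1+((ℓ-3)+1)]) :=
    calc List.range ℓ = List.range 1 ++ (List.range (((ℓ-3)+1)+1)).map (1 + ·) := by
          rw [← List.range_add]; congr 1; omega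
      _ = _ := by
          rw [show List.range (((ℓ-3)+1)+1) = List.range ((ℓ-3)+1) ++ [(ℓ-3)+1] from
              List.range_succ,
            show List.range ((ℓ-3)+1) = List.range (ℓ-3) ++ [ℓ-3] from List.range_succ,
            List.map_append, List.map_append]
          rfl
  rw [h1, show List.range 1 = [0] from rfl]
  simp only [List.map_append, List.prod_append, List.map_map, List.map_cons, List.map_nil,
    List.prod_cons, List.prod_nil, Function.comp, Function.comp_def, mul_one, one_mul, mul_assoc]

lemma decompZ2 (h2 : ℓ = 2) :
    ((List.range ℓ).map (fun k : ℕ => Z ℓ n ((k : ZMod ℓ) + 1))).prod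
      = Z ℓ n 1 * Z ℓ n (1 + 1) := by
  subst h2
  show Z 2 n (((0:ℕ) : ZMod 2) + 1) * (Z 2 n (((1:ℕ) : ZMod 2) + 1) * 1)
      = Z 2 n 1 * Z 2 n (1 + 1)
  rw [show (((0:ℕ) : ZMod 2) + 1) = 1 by decide, show (((1:ℕ) : ZMod 2) + 1) = 1 + 1 by decide,
    mul_one]

lemma decompYj (j : ℕ) (hj : 2 ≤ j) (hj2 : j + 1 ≤ ℓ) :
    ((List.range ℓ).map (fun k : ℕ => Yv ℓ n ((k : ZMod ℓ) + 1))).prod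
      = (((List.range (j-2)).map (fun k : ℕ => Yv ℓ n ((k : ZMod ℓ) + 1))).prod)
        * (Yv ℓ n (((j-2 : ℕ) : ZMod ℓ) + 1) * (Yv ℓ n (((j-2+1 : ℕ) : ZMod ℓ) + 1)
          * (Yv ℓ n (((j-2+1+1 : ℕ) : ZMod ℓ) + 1)
            * (((List.range (ℓ-(j+1))).map
                (fun k : ℕ => Yv ℓ n (((j+1+k : ℕ) : ZMod ℓ) + 1))).prod)))) := by
  have h1 : List.range ℓ = List.range (j+1) ++ (List.range (ℓ-(j+1))).map ((j+1) + ·) := by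
    rw [← List.range_add]; congr 1; omega
  have h2 : List.range (j+1) = List.range (j-2) ++ [j-2, j-2+1, j-2+1+1] := by
    rw [show j+1 = (((j-2)+1)+1)+1 by omega, List.range_succ, List.range_succ, List.range_succ,
      List.append_assoc, List.append_assoc]
    rfl
  rw [h2] at h1
  rw [h1]
  simp only [List.map_append, List.prod_append, List.map_map, List.map_cons, List.map_nil,
    List.prod_cons, List.prod_nil, Function.comp, Function.comp_def, mul_one, one_mul, mul_assoc]

end Waux

end Aux


namespace Statement8

open Rmatrix Dell
open Aux

/--
For `ℓ ≥ 2` and `X^∘ = X^{(1)}⋯X^{(ℓ)}` in `D_ℓ`: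
`X^{(1)}₁ X^∘₂ = R₂₁⁻¹ X^∘₂ R₂₁ X^{(1)}₁` and `X^∘₁ X^{(ℓ)}₂ = X^{(ℓ)}₂ R₂₁ X^∘₁ R₂₁⁻¹`;
moreover, for `ℓ ≥ 3` and `a ≠ 1, ℓ`, `X^{(a)}₁ X^∘₂ = X^∘₂ X^{(a)}₁`.
-/
theorem statement_8 (ℓ n : ℕ) (hl : 2 ≤ ℓ) (hn : 1 ≤ n) :
    (q1 ℓ n (XM ℓ n 1) * q2 ℓ n (Xcirc ℓ n)
      = R21ia ℓ n * q2 ℓ n (Xcirc ℓ n) * R21a ℓ n * q1 ℓ n (XM ℓ n 1)) ∧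
    (q1 ℓ n (Xcirc ℓ n) * q2 ℓ n (XM ℓ n (ℓ : ZMod ℓ))
      = q2 ℓ n (XM ℓ n (ℓ : ZMod ℓ)) * R21a ℓ n * q1 ℓ n (Xcirc ℓ n) * R21ia ℓ n) ∧
    (3 ≤ ℓ → ∀ a : ZMod ℓ, a ≠ 1 → a ≠ (ℓ : ZMod ℓ) →
      q1 ℓ n (XM ℓ n a) * q2 ℓ n (Xcirc ℓ n) = q2 ℓ n (Xcirc ℓ n) * q1 ℓ n (XM ℓ n a)) := by
  refine ⟨?_, ?_, ?_⟩
  · -- Claim (i)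
    show Z ℓ n 1 * q2 ℓ n (Xcirc ℓ n)
        = R21ia ℓ n * q2 ℓ n (Xcirc ℓ n) * R21a ℓ n * Z ℓ n 1
    rw [q2_Xcirc]
    rcases eq_or_lt_of_le hl with h2 | h3
    · have h2 : ℓ = 2 := h2.symm
      rw [decompY2 ℓ n h2]
      simp only [mul_assoc]
      rw [W1, ← T4' ℓ n h2]
    · have h3 : 3 ≤ ℓ := h3
      rw [decompY3 ℓ n h3,
        show (((0:ℕ) : ZMod ℓ) + 1) = 1 by norm_num,
        show (((1:ℕ) : ZMod ℓ) + 1) = 2 by norm_num,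
        show (((2+(ℓ-3) : ℕ) : ZMod ℓ) + 1) = 0 from by
          rw [show (2+(ℓ-3) : ℕ) = ℓ-1 by omega]
          exact cast_pred_add_one ℓ (by omega)]
      have hcomm : Z ℓ n 1 *
            (((List.range (ℓ-3)).map (fun k : ℕ => Yv ℓ n (((2+k : ℕ) : ZMod ℓ) + 1))).prod)
          = (((List.range (ℓ-3)).map
              (fun k : ℕ => Yv ℓ n (((2+k : ℕ) : ZMod ℓ) + 1))).prod) * Z ℓ n 1 := by
        refine (Commute.list_prod_right _ _ (fun x hx => ?_)).eq
        obtain ⟨k, hk, rfl⟩ := List.mem_map.mp hx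
        have hkl : k < ℓ - 3 := List.mem_range.mp hk
        have hb : ((2+k : ℕ) : ZMod ℓ) + 1 = ((k+3 : ℕ) : ZMod ℓ) := by push_cast; ring
        rw [hb]
        refine (rel3 ℓ n 1 _ ⟨?_, ?_, ?_⟩ : _)
        · rw [show (1 : ZMod ℓ) = ((1:ℕ) : ZMod ℓ) by norm_num]
          exact cast_ne_cast (by omega) (by omega) (by omega) (by omega) (by omega)
        · rw [show (1 + 1 : ZMod ℓ) = ((2:ℕ) : ZMod ℓ) by push_cast; ring]
          exact cast_ne_cast (by omega) (by omega) (by omega) (by omega) (by omega)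
        · rw [show (1 - 1 : ZMod ℓ) = ((0:ℕ) : ZMod ℓ) by push_cast; ring]
          exact cast_ne_cast (by omega) (by omega) (by omega) (by omega) (by omega)
      have hS2 : ∀ W, Z ℓ n 1 * (Ra ℓ n * (Yv ℓ n 2 * W)) = Yv ℓ n 2 * (Z ℓ n 1 * W) := by
        intro W
        have h := W2' ℓ n h3 2 W
        rw [show (2 : ZMod ℓ) - 1 = 1 by ring] at h
        exact h.symm
      have hS4 : Z ℓ n 1 * Yv ℓ n 0 = Yv ℓ n 0 * (R21a ℓ n * Z ℓ n 1) := by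
        have h := T2 ℓ n h3 1
        rw [sub_self] at h
        exact h
      simp only [mul_assoc]
      rw [W1, hS2, comm_W hcomm, hS4]
  · -- Claim (ii)
    rw [ZMod.natCast_self]
    show q1 ℓ n (Xcirc ℓ n) * Yv ℓ n 0
        = Yv ℓ n 0 * R21a ℓ n * q1 ℓ n (Xcirc ℓ n) * R21ia ℓ n
    suffices H : Yv ℓ n 0 * (R21a ℓ n * q1 ℓ n (Xcirc ℓ n))
        = q1 ℓ n (Xcirc ℓ n) * (Yv ℓ n 0 * R21a ℓ n) by
      have e := congrArg (· * R21ia ℓ n) H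
      simp only [mul_assoc] at e
      rw [R21a_mul_R21ia, mul_one] at e
      simp only [mul_assoc]
      exact e.symm
    rw [q1_Xcirc]
    rcases eq_or_lt_of_le hl with h2 | h3
    · have h2 : ℓ = 2 := h2.symm
      rw [decompZ2 ℓ n h2, show (0 : ZMod ℓ) = 1 + 1 from by subst h2; decide]
      simp only [mul_assoc]
      rw [W4' ℓ n h2, T1' ℓ n (1 + 1)]
    · have h3 : 3 ≤ ℓ := h3
      rw [decompZ3 ℓ n h3,
        show (((0:ℕ) : ZMod ℓ) + 1) = 1 by norm_num,
        show ((1+(ℓ-3) : ℕ) : ZMod ℓ) + 1 = 0 - 1 from by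
          rw [show ((1+(ℓ-3) : ℕ) : ZMod ℓ) + 1 = ((1+(ℓ-3)+1 : ℕ) : ZMod ℓ) by push_cast; ring,
            show (1+(ℓ-3)+1 : ℕ) = ℓ-1 by omega, Nat.cast_sub (by omega : 1 ≤ ℓ),
            Nat.cast_one, ZMod.natCast_self],
        show ((1+((ℓ-3)+1) : ℕ) : ZMod ℓ) + 1 = 0 from by
          rw [show (1+((ℓ-3)+1) : ℕ) = ℓ-1 by omega]
          exact cast_pred_add_one ℓ (by omega)]
      have hcomm : Yv ℓ n 0 *
            (((List.range (ℓ-3)).map (fun k : ℕ => Z ℓ n (((1+k : ℕ) : ZMod ℓ) + 1))).prod)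
          = (((List.range (ℓ-3)).map
              (fun k : ℕ => Z ℓ n (((1+k : ℕ) : ZMod ℓ) + 1))).prod) * Yv ℓ n 0 := by
        refine (Commute.list_prod_right _ _ (fun x hx => ?_)).eq
        obtain ⟨k, hk, rfl⟩ := List.mem_map.mp hx
        have hkl : k < ℓ - 3 := List.mem_range.mp hk
        have hb : ((1+k : ℕ) : ZMod ℓ) + 1 = ((k+2 : ℕ) : ZMod ℓ) := by push_cast; ring
        rw [hb]
        refine ((rel3 ℓ n ((k+2 : ℕ)) 0 ⟨?_, ?_, ?_⟩).symm : _)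
        · rw [show (0 : ZMod ℓ) = ((0:ℕ) : ZMod ℓ) by norm_num]
          exact cast_ne_cast (by omega) (by omega) (by omega) (by omega) (by omega)
        · rw [show ((k+2 : ℕ) : ZMod ℓ) + 1 = ((k+3:ℕ) : ZMod ℓ) by push_cast; ring,
            show (0 : ZMod ℓ) = ((0:ℕ) : ZMod ℓ) by norm_num]
          exact cast_ne_cast (by omega) (by omega) (by omega) (by omega) (by omega)
        · rw [show ((k+2 : ℕ) : ZMod ℓ) - 1 = ((k+1:ℕ) : ZMod ℓ) by push_cast; ring,
            show (0 : ZMod ℓ) = ((0:ℕ) : ZMod ℓ) by norm_num]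
          exact cast_ne_cast (by omega) (by omega) (by omega) (by omega) (by omega)
      have hW2 : ∀ W, Z ℓ n 1 * (Yv ℓ n 0 * W) = Yv ℓ n 0 * (R21a ℓ n * (Z ℓ n 1 * W)) := by
        intro W
        have h := W2 ℓ n h3 1 W
        rw [sub_self] at h
        exact h
      simp only [mul_assoc]
      rw [← hW2, comm_W hcomm, W2' ℓ n h3 0, T1' ℓ n 0]
  · -- Claim (iii)
    intro h3 a ha1 hal
    haveI : NeZero ℓ := ⟨by omega⟩
    set j := a.val with hjdef
    have hja : ((j : ℕ) : ZMod ℓ) = a := by rw [hjdef, ZMod.natCast_val, ZMod.cast_id]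
    have hjl : j < ℓ := a.val_lt
    have hj0 : j ≠ 0 := by
      intro h
      apply hal
      rw [ZMod.natCast_self, ← hja, h, Nat.cast_zero]
    have hj1 : j ≠ 1 := by
      intro h
      apply ha1
      rw [← hja, h, Nat.cast_one]
    have hj2 : 2 ≤ j := by omega
    show Z ℓ n a * q2 ℓ n (Xcirc ℓ n) = q2 ℓ n (Xcirc ℓ n) * Z ℓ n a
    rw [← hja, q2_Xcirc, decompYj ℓ n j hj2 (by omega),
      show ((j-2 : ℕ) : ZMod ℓ) + 1 = ((j : ℕ) : ZMod ℓ) - 1 from by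
        rw [show ((j-2:ℕ) : ZMod ℓ) + 1 = ((j-2+1 : ℕ) : ZMod ℓ) by push_cast; ring,
          show (j-2+1 : ℕ) = j-1 by omega, Nat.cast_sub (by omega : 1 ≤ j), Nat.cast_one],
      show ((j-2+1 : ℕ) : ZMod ℓ) + 1 = ((j:ℕ) : ZMod ℓ) from by
        rw [show ((j-2+1:ℕ) : ZMod ℓ) + 1 = ((j-2+1+1 : ℕ) : ZMod ℓ) by push_cast; ring]
        congr 1
        omega,
      show ((j-2+1+1 : ℕ) : ZMod ℓ) + 1 = ((j:ℕ) : ZMod ℓ) + 1 from by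
        congr 2
        omega]
    have hA : Z ℓ n ((j : ℕ)) *
          (((List.range (j-2)).map (fun k : ℕ => Yv ℓ n ((k : ZMod ℓ) + 1))).prod)
        = (((List.range (j-2)).map (fun k : ℕ => Yv ℓ n ((k : ZMod ℓ) + 1))).prod)
          * Z ℓ n ((j : ℕ)) := by
      refine (Commute.list_prod_right _ _ (fun x hx => ?_)).eq
      obtain ⟨k, hk, rfl⟩ := List.mem_map.mp hx
      have hkl : k < j - 2 := List.mem_range.mp hk
      have hb : (k : ZMod ℓ) + 1 = ((k+1 : ℕ) : ZMod ℓ) := by push_cast; ring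
      rw [hb]
      refine (rel3 ℓ n ((j : ℕ)) _ ⟨?_, ?_, ?_⟩ : _)
      · exact cast_ne_cast (by omega) (by omega) (by omega) (by omega) (by omega)
      · rw [show ((j : ℕ) : ZMod ℓ) + 1 = ((j+1:ℕ) : ZMod ℓ) by push_cast; ring]
        exact cast_ne_cast (by omega) (by omega) (by omega) (by omega) (by omega)
      · rw [show ((j : ℕ) : ZMod ℓ) - 1 = ((j-1:ℕ) : ZMod ℓ) from by
            rw [Nat.cast_sub (by omega : 1 ≤ j), Nat.cast_one]]
        exact cast_ne_cast (by omega) (by omega) (by omega) (by omega) (by omega)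
    have hB : Z ℓ n ((j : ℕ)) *
          (((List.range (ℓ-(j+1))).map
            (fun k : ℕ => Yv ℓ n (((j+1+k : ℕ) : ZMod ℓ) + 1))).prod)
        = (((List.range (ℓ-(j+1))).map
            (fun k : ℕ => Yv ℓ n (((j+1+k : ℕ) : ZMod ℓ) + 1))).prod) * Z ℓ n ((j : ℕ)) := by
      refine (Commute.list_prod_right _ _ (fun x hx => ?_)).eq
      obtain ⟨k, hk, rfl⟩ := List.mem_map.mp hx
      have hkl : k < ℓ - (j+1) := List.mem_range.mp hk
      have hb : ((j+1+k : ℕ) : ZMod ℓ) + 1 = ((j+2+k : ℕ) : ZMod ℓ) := by push_cast; ring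
      rw [hb]
      refine (rel3 ℓ n ((j : ℕ)) _ ⟨?_, ?_, ?_⟩ : _)
      · exact cast_ne_cast (by omega) (by omega) (by omega) (by omega) (by omega)
      · rw [show ((j : ℕ) : ZMod ℓ) + 1 = ((j+1:ℕ) : ZMod ℓ) by push_cast; ring]
        exact cast_ne_cast (by omega) (by omega) (by omega) (by omega) (by omega)
      · rw [show ((j : ℕ) : ZMod ℓ) - 1 = ((j-1:ℕ) : ZMod ℓ) from by
            rw [Nat.cast_sub (by omega : 1 ≤ j), Nat.cast_one]]
        exact cast_ne_cast (by omega) (by omega) (by omega) (by omega) (by omega)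
    have hW3 : ∀ W, Z ℓ n ((j : ℕ)) * (Ra ℓ n * (Yv ℓ n (((j : ℕ) : ZMod ℓ) + 1) * W))
        = Yv ℓ n (((j : ℕ) : ZMod ℓ) + 1) * (Z ℓ n ((j : ℕ)) * W) := by
      intro W
      have h := W2' ℓ n h3 (((j : ℕ) : ZMod ℓ) + 1) W
      rw [add_sub_cancel_right] at h
      exact h.symm
    simp only [mul_assoc]
    rw [comm_W hA, W2 ℓ n h3 ((j : ℕ)), W1L ℓ n ((j : ℕ)), hW3, hB]


end Statement8
end
end

section
/- In D_1, set ^LỸ := I + XD and ^RY := I + DX (matrices over D_1). Then the following identities hold: (i) R^{−1} (^LỸ)_1 R_{21}^{−1} (^LỸ)_2 = (^LỸ)_2 R^{−1} (^LỸ)_1 R_{21}^{−1}; (ii) R_{21} (^RY)_1 R (^RY)_2 = (^RY)_2 R_{21} (^RY)_1 R; (iii) (^LỸ)_1 R_{21}^{−1} X_2 = R X_2 R_{21} (^LỸ)_1 R_{21}^{−1}; (iv) (^LỸ)_1 R_{21}^{−1} D_2 = R_{21}^{−1} D_2 R^{−1} (^LỸ)_1 R_{21}^{−1}; (v) (^RY)_1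 R X_2 = R X_2 R_{21} (^RY)_1 R; (vi) (^RY)_1 R D_2 = R_{21}^{−1} D_2 R^{−1} (^RY)_1 R. -/
noncomputable section
open scoped BigOperators

namespace Statement12

open Rmatrix

variable (n : ℕ)

/-- Generators `x_ij`, `∂_ij` of the algebra `D_1`. -/
inductive Gen (n : ℕ) : Type
  | x : Fin n → Fin n → Gen n
  | d : Fin n → Fin n → Gen n

abbrev FA (n : ℕ) := FreeAlgebra K (Gen n)

/-- The matrix `X` of generators, over the free algebra. -/
def xF (n : ℕ) : Matrix (Fin n) (Fin n) (FA n) := fun i j => FreeAlgebra.ι K (Gen.x i j)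
/-- The matrix `D` of generators, over the free algebra. -/
def dF (n : ℕ) : Matrix (Fin n) (Fin n) (FA n) := fun i j => FreeAlgebra.ι K (Gen.d i j)

/-- The defining relations of the algebra `D_1` of quantum differential operators:
`R₂₁X₁RX₂ = X₂R₂₁X₁R`, `R⁻¹D₁R₂₁⁻¹D₂ = D₂R⁻¹D₁R₂₁⁻¹`, and
`D₁R₂₁⁻¹X₂R₂₁ = RX₂R₂₁D₁ + (q−q⁻¹)RΩ`. -/
inductive Rel (n : ℕ) : FA n → FA n → Prop
  | rXX (p r : Idx n) :
      Rel n ((ext n (FA n) (Rm21 n) * m1 n (FA n) (xF n) * ext n (FA n) (Rm n) *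
                m2 n (FA n) (xF n)) p r)
            ((m2 n (FA n) (xF n) * ext n (FA n) (Rm21 n) * m1 n (FA n) (xF n) *
                ext n (FA n) (Rm n)) p r)
  | rDD (p r : Idx n) :
      Rel n ((ext n (FA n) (Rm n)⁻¹ * m1 n (FA n) (dF n) * ext n (FA n) (Rm21 n)⁻¹ *
                m2 n (FA n) (dF n)) p r)
            ((m2 n (FA n) (dF n) * ext n (FA n) (Rm n)⁻¹ * m1 n (FA n) (dF n) *
                ext n (FA n) (Rm21 n)⁻¹) p r)
  | rDX (p r : Idx n) :
      Rel n ((m1 n (FA n) (dF n) * ext n (FA n) (Rm21 n)⁻¹ * m2 n (FA n) (xF n) *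
                ext n (FA n) (Rm21 n)) p r)
            ((ext n (FA n) (Rm n) * m2 n (FA n) (xF n) * ext n (FA n) (Rm21 n) *
                m1 n (FA n) (dF n) +
              (qq - qq⁻¹) • (ext n (FA n) (Rm n) * Om n (FA n))) p r)

/-- The algebra `D_1` of quantum differential operators. -/
abbrev D1 (n : ℕ) := RingQuot (Rel n)

/-- The matrix `X` over `D_1`. -/
def XM (n : ℕ) : Matrix (Fin n) (Fin n) (D1 n) :=
  fun i j => RingQuot.mkAlgHom K (Rel n) (xF n i j)

/-- The matrix `D` over `D_1`. -/
def DM (n : ℕ) : Matrix (Fin n) (Fin n) (D1 n) :=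
  fun i j => RingQuot.mkAlgHom K (Rel n) (dF n i j)

/-- `^LỸ := I + XD`. -/
def LY (n : ℕ) : Matrix (Fin n) (Fin n) (D1 n) := 1 + XM n * DM n

/-- `^RY := I + DX`. -/
def RY (n : ℕ) : Matrix (Fin n) (Fin n) (D1 n) := 1 + DM n * XM n

set_option synthInstance.maxHeartbeats 1000000
set_option maxHeartbeats 2000000

namespace Rmx
open Rmatrix Matrix

lemma qq_ne_zero : qq ≠ 0 := RatFunc.X_ne_zero

abbrev cc : K := qq - qq⁻¹

variable (n : ℕ)

/-- nilpotent part of R -/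
def Nm : Matrix (Idx n) (Idx n) K := fun p r =>
  if p.1 = r.2 ∧ p.2 = r.1 ∧ p.1 < p.2 then 1 else 0

/-- permutation matrix -/
def Pm : Matrix (Idx n) (Idx n) K := fun p r =>
  if p.1 = r.2 ∧ p.2 = r.1 then 1 else 0

def dg : Idx n → K := fun p => if p.1 = p.2 then qq else 1
def dg' : Idx n → K := fun p => if p.1 = p.2 then qq⁻¹ else 1

lemma Rm_eq : Rm n = diagonal (dg n) + cc • Nm n := by
  funext p r
  simp only [Rm, Nm, dg, diagonal, Matrix.add_apply, Matrix.smul_apply, of_apply,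
    Prod.ext_iff, smul_eq_mul, mul_ite, mul_one, mul_zero]
  split_ifs <;>
    first
      | ring1
      | (exfalso; simp only [Prod.ext_iff, Prod.fst_swap, Prod.snd_swap, Fin.lt_def, Fin.ext_iff,
          not_and, not_lt, ne_eq, not_forall, not_le] at *; omega)

lemma dg_mul_dg' : ∀ p : Idx n, dg n p * dg' n p = 1 := by
  intro p; simp only [dg, dg']
  split_ifs <;> simp [mul_inv_cancel₀ qq_ne_zero]

lemma dg'_mul_dg : ∀ p : Idx n, dg' n p * dg n p = 1 := by
  intro p; simp only [dg, dg']
  split_ifs <;> simp [inv_mul_cancel₀ qq_ne_zero]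

lemma dg_Nm : diagonal (dg n) * Nm n = Nm n := by
  funext p r
  rw [Matrix.diagonal_mul]
  simp only [Nm, dg]
  split_ifs <;>
    first
      | ring1
      | (exfalso; simp only [Fin.lt_def, Fin.ext_iff, not_and, not_lt] at *; omega)

lemma Nm_dg : Nm n * diagonal (dg n) = Nm n := by
  funext p r
  rw [Matrix.mul_diagonal]
  simp only [Nm, dg]
  split_ifs <;>
    first
      | ring1
      | (exfalso; simp only [Fin.lt_def, Fin.ext_iff, not_and, not_lt] at *; omega)

lemma dg'_Nm : diagonal (dg' n) * Nm n = Nm n := by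
  funext p r
  rw [Matrix.diagonal_mul]
  simp only [Nm, dg']
  split_ifs <;>
    first
      | ring1
      | (exfalso; simp only [Fin.lt_def, Fin.ext_iff, not_and, not_lt] at *; omega)

lemma Nm_dg' : Nm n * diagonal (dg' n) = Nm n := by
  funext p r
  rw [Matrix.mul_diagonal]
  simp only [Nm, dg']
  split_ifs <;>
    first
      | ring1
      | (exfalso; simp only [Fin.lt_def, Fin.ext_iff, not_and, not_lt] at *; omega)

lemma Nm_Nm : Nm n * Nm n = 0 := by
  funext p r
  rw [Matrix.mul_apply]
  rw [show (0 : Matrix (Idx n) (Idx n) K) p r = 0 from rfl]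
  apply Finset.sum_eq_zero
  intro s _
  simp only [Nm]
  split_ifs <;>
    first
      | ring1
      | (exfalso; simp only [Fin.lt_def, Fin.ext_iff, not_and, not_lt] at *; omega)

/-- explicit inverse of R -/
def RmI : Matrix (Idx n) (Idx n) K := diagonal (dg' n) - cc • Nm n

lemma Rm_mul_RmI : Rm n * RmI n = 1 := by
  have h1 : (fun i => dg n i * dg' n i) = fun _ => (1:K) := funext (dg_mul_dg' n)
  rw [Rm_eq, RmI]
  simp only [add_mul, mul_sub, sub_mul, mul_add, diagonal_mul_diagonal, Matrix.mul_smul,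
    Matrix.smul_mul, dg_Nm, Nm_dg', Nm_Nm, smul_zero, h1, Matrix.diagonal_one]
  abel

lemma RmI_mul_Rm : RmI n * Rm n = 1 := by
  have h1 : (fun i => dg' n i * dg n i) = fun _ => (1:K) := funext (dg'_mul_dg n)
  rw [Rm_eq, RmI]
  simp only [add_mul, mul_sub, sub_mul, mul_add, diagonal_mul_diagonal, Matrix.mul_smul,
    Matrix.smul_mul, dg'_Nm, Nm_dg, Nm_Nm, smul_zero, h1, Matrix.diagonal_one]
  abel

lemma Rm_inv : (Rm n)⁻¹ = RmI n := Matrix.inv_eq_right_inv (Rm_mul_RmI n)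

/-- the swap equiv -/
def sw : Idx n ≃ Idx n := Equiv.prodComm _ _

def Rm21I : Matrix (Idx n) (Idx n) K := (RmI n).submatrix (sw n) (sw n)

lemma Rm21_eq : Rm21 n = (Rm n).submatrix (sw n) (sw n) := rfl

lemma sub_one : (1 : Matrix (Idx n) (Idx n) K).submatrix (sw n) (sw n) = 1 := by
  rw [Matrix.submatrix_one_equiv]

lemma Rm21_mul_Rm21I : Rm21 n * Rm21I n = 1 := by
  rw [Rm21_eq, Rm21I, Matrix.submatrix_mul_equiv, Rm_mul_RmI, sub_one]

lemma Rm21_inv : (Rm21 n)⁻¹ = Rm21I n := Matrix.inv_eq_right_inv (Rm21_mul_Rm21I n)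

lemma Rm21I_mul_Rm21 : Rm21I n * Rm21 n = 1 := by
  rw [Rm21_eq, Rm21I, Matrix.submatrix_mul_equiv, RmI_mul_Rm, sub_one]

lemma hecke1 : Rm n = Rm21I n + cc • Pm n := by
  funext p r
  simp only [Rm, Rm21I, RmI, Pm, Nm, dg', sw, Equiv.prodComm_apply, Matrix.submatrix_apply,
    Matrix.add_apply, Matrix.sub_apply, Matrix.smul_apply, diagonal, of_apply, Prod.swap_prod_mk,
    Prod.ext_iff, smul_eq_mul, mul_ite, mul_one, mul_zero]
  split_ifs <;>
    first
      | ring1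
      | (exfalso; simp only [Prod.ext_iff, Prod.fst_swap, Prod.snd_swap, Fin.lt_def, Fin.ext_iff,
          not_and, not_lt, ne_eq, not_forall, not_le] at *; omega)

lemma hecke2 : Rm21 n = RmI n + cc • Pm n := by
  funext p r
  simp only [Rm21, Rm, RmI, Pm, Nm, dg',
    Matrix.add_apply, Matrix.sub_apply, Matrix.smul_apply, diagonal, of_apply,
    Prod.ext_iff, smul_eq_mul, mul_ite, mul_one, mul_zero]
  split_ifs <;>
    first
      | ring1
      | (exfalso; simp only [Prod.ext_iff, Prod.fst_swap, Prod.snd_swap, Fin.lt_def, Fin.ext_iff,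
          not_and, not_lt, ne_eq, not_forall, not_le] at *; omega)

end Rmx

namespace Rmx
open Rmatrix Matrix

section General
variable (n : ℕ) (A : Type) [Ring A] [Algebra K A]

lemma ext_mul (M N : Matrix (Idx n) (Idx n) K) :
    Rmatrix.ext n A (M * N) = Rmatrix.ext n A M * Rmatrix.ext n A N :=
  Matrix.map_mul (f := algebraMap K A)

lemma ext_one : Rmatrix.ext n A (1 : Matrix (Idx n) (Idx n) K) = 1 :=
  Matrix.map_one _ (map_zero _) (map_one _)

lemma ext_add (M N : Matrix (Idx n) (Idx n) K) :
    Rmatrix.ext n A (M + N) = Rmatrix.ext n A M + Rmatrix.ext n A N := by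
  funext p r
  simp [Rmatrix.ext, Matrix.map_apply, Matrix.add_apply, map_add]

lemma ext_smul (c : K) (M : Matrix (Idx n) (Idx n) K) :
    Rmatrix.ext n A (c • M) = c • Rmatrix.ext n A M := by
  funext p r
  show (algebraMap K A) (c • (M p r)) = c • ((algebraMap K A) (M p r))
  rw [smul_eq_mul, _root_.map_mul, Algebra.smul_def]

lemma m1_mul (M N : Matrix (Fin n) (Fin n) A) :
    m1 n A (M * N) = m1 n A M * m1 n A N := by
  funext p r
  obtain ⟨p1, p2⟩ := p; obtain ⟨r1, r2⟩ := r
  simp only [m1, Matrix.mul_apply, ite_mul, zero_mul, mul_ite, mul_zero,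
    Fintype.sum_prod_type]
  simp only [Finset.sum_ite_eq', Finset.mem_univ, if_true]
  by_cases h : p2 = r2
  · subst h; simp
  · simp [h]

lemma m2_mul (M N : Matrix (Fin n) (Fin n) A) :
    m2 n A (M * N) = m2 n A M * m2 n A N := by
  funext p r
  obtain ⟨p1, p2⟩ := p; obtain ⟨r1, r2⟩ := r
  simp only [m2, Matrix.mul_apply, ite_mul, zero_mul, mul_ite, mul_zero,
    Fintype.sum_prod_type]
  rw [Finset.sum_comm]
  simp only [Finset.sum_ite_eq, Finset.sum_ite_eq', Finset.sum_ite_irrel, Finset.sum_const_zero,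
    Finset.mem_univ, if_true]

lemma m1_one : m1 n A 1 = 1 := by
  funext p r
  obtain ⟨p1, p2⟩ := p; obtain ⟨r1, r2⟩ := r
  simp only [m1, Matrix.one_apply, Prod.mk.injEq]
  split_ifs <;> simp_all

lemma m2_one : m2 n A 1 = 1 := by
  funext p r
  obtain ⟨p1, p2⟩ := p; obtain ⟨r1, r2⟩ := r
  simp only [m2, Matrix.one_apply, Prod.mk.injEq]
  split_ifs <;> simp_all

lemma m1_add (M N : Matrix (Fin n) (Fin n) A) :
    m1 n A (M + N) = m1 n A M + m1 n A N := by
  funext p r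
  simp only [m1, Matrix.add_apply]
  split_ifs <;> simp

lemma m2_add (M N : Matrix (Fin n) (Fin n) A) :
    m2 n A (M + N) = m2 n A M + m2 n A N := by
  funext p r
  simp only [m2, Matrix.add_apply]
  split_ifs <;> simp

/-- swap conjugation on matrices over A -/
def swm (M : Matrix (Idx n) (Idx n) A) : Matrix (Idx n) (Idx n) A :=
  M.submatrix (⇑(sw n)) (⇑(sw n))

lemma sw_sw : (⇑(sw n) ∘ ⇑(sw n)) = id := by
  funext p; rfl

lemma swm_mul (M N : Matrix (Idx n) (Idx n) A) :
    swm n A (M * N) = swm n A M * swm n A N :=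
  (Matrix.submatrix_mul_equiv M N _ (sw n) _).symm

lemma swm_add (M N : Matrix (Idx n) (Idx n) A) :
    swm n A (M + N) = swm n A M + swm n A N := rfl

lemma swm_one : swm n A 1 = 1 := Matrix.submatrix_one_equiv (sw n)

lemma swm_smul (c : K) (M : Matrix (Idx n) (Idx n) A) :
    swm n A (c • M) = c • swm n A M := rfl

lemma swm_m1 (M : Matrix (Fin n) (Fin n) A) : swm n A (m1 n A M) = m2 n A M := by
  funext p r; rfl

lemma swm_m2 (M : Matrix (Fin n) (Fin n) A) : swm n A (m2 n A M) = m1 n A M := by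
  funext p r; rfl

lemma swm_Om : swm n A (Om n A) = Om n A := by
  funext p r
  obtain ⟨p1, p2⟩ := p; obtain ⟨r1, r2⟩ := r
  simp only [swm, Om, Matrix.submatrix_apply, sw, Equiv.prodComm_apply, Prod.swap_prod_mk]
  split_ifs <;> simp_all [and_comm]

lemma swm_ext (M : Matrix (Idx n) (Idx n) K) :
    swm n A (Rmatrix.ext n A M) = Rmatrix.ext n A (M.submatrix (⇑(sw n)) (⇑(sw n))) := rfl

lemma omL (M : Matrix (Idx n) (Idx n) A) :
    Om n A * M = M.submatrix (⇑(sw n)) id := by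
  funext p r
  obtain ⟨p1, p2⟩ := p
  simp only [Om, Matrix.mul_apply, ite_and, ite_mul, zero_mul, one_mul,
    Fintype.sum_prod_type, Matrix.submatrix_apply, sw, Equiv.prodComm_apply, Prod.swap_prod_mk,
    id_eq]
  simp only [Finset.sum_ite_eq, Finset.mem_univ, if_true]

lemma omR (M : Matrix (Idx n) (Idx n) A) :
    M * Om n A = M.submatrix id (⇑(sw n)) := by
  funext p r
  obtain ⟨r1, r2⟩ := r
  simp only [Om, Matrix.mul_apply, ite_and, mul_ite, mul_zero, mul_one,
    Fintype.sum_prod_type, Matrix.submatrix_apply, sw, Equiv.prodComm_apply, Prod.swap_prod_mk,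
    id_eq]
  simp only [Finset.sum_ite_eq, Finset.sum_ite_eq', Finset.sum_ite_irrel, Finset.sum_const_zero,
    Finset.mem_univ, if_true]

lemma om_comm (M : Matrix (Idx n) (Idx n) A) :
    Om n A * M = swm n A M * Om n A := by
  rw [omL, omR, swm, Matrix.submatrix_submatrix, sw_sw]
  rfl

lemma om_om : Om n A * Om n A = 1 := by
  rw [omL]
  funext p r
  obtain ⟨p1, p2⟩ := p; obtain ⟨r1, r2⟩ := r
  simp only [Om, Matrix.submatrix_apply, sw, Equiv.prodComm_apply, Prod.swap_prod_mk, id_eq,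
    Matrix.one_apply, Prod.mk.injEq]
  split_ifs <;> simp_all [and_comm]

end General
end Rmx

namespace Rmx
open Rmatrix Matrix Statement12

section Spec
variable (n : ℕ)

def RRm : Matrix (Idx n) (Idx n) (D1 n) := Rmatrix.ext n (D1 n) (Rm n)
def RRi : Matrix (Idx n) (Idx n) (D1 n) := Rmatrix.ext n (D1 n) (RmI n)
def SSm : Matrix (Idx n) (Idx n) (D1 n) := Rmatrix.ext n (D1 n) (Rm21 n)
def SSi : Matrix (Idx n) (Idx n) (D1 n) := Rmatrix.ext n (D1 n) (Rm21I n)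
def WW : Matrix (Idx n) (Idx n) (D1 n) := Om n (D1 n)
def CW : Matrix (Idx n) (Idx n) (D1 n) := cc • WW n
def Xa : Matrix (Idx n) (Idx n) (D1 n) := m1 n (D1 n) (XM n)
def Xb : Matrix (Idx n) (Idx n) (D1 n) := m2 n (D1 n) (XM n)
def Da : Matrix (Idx n) (Idx n) (D1 n) := m1 n (D1 n) (DM n)
def Db : Matrix (Idx n) (Idx n) (D1 n) := m2 n (D1 n) (DM n)

lemma RRm_def : RRm n = Rmatrix.ext n (D1 n) (Rm n) := rfl
lemma RRi_def : RRi n = Rmatrix.ext n (D1 n) (RmI n) := rfl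
lemma SSm_def : SSm n = Rmatrix.ext n (D1 n) (Rm21 n) := rfl
lemma SSi_def : SSi n = Rmatrix.ext n (D1 n) (Rm21I n) := rfl
lemma WW_def : WW n = Om n (D1 n) := rfl
lemma CW_def : CW n = cc • WW n := rfl
lemma Xa_def : Xa n = m1 n (D1 n) (XM n) := rfl
lemma Xb_def : Xb n = m2 n (D1 n) (XM n) := rfl
lemma Da_def : Da n = m1 n (D1 n) (DM n) := rfl
lemma Db_def : Db n = m2 n (D1 n) (DM n) := rfl

/-- entrywise application of the quotient map -/
def Ph (M : Matrix (Idx n) (Idx n) (FA n)) : Matrix (Idx n) (Idx n) (D1 n) :=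
  M.map (RingQuot.mkAlgHom K (Rel n))

lemma Ph_mul (M N : Matrix (Idx n) (Idx n) (FA n)) : Ph n (M * N) = Ph n M * Ph n N := by
  have h := Matrix.map_mul (L := M) (M := N) (f := (RingQuot.mkAlgHom K (Rel n)).toRingHom)
  exact h

lemma Ph_add (M N : Matrix (Idx n) (Idx n) (FA n)) : Ph n (M + N) = Ph n M + Ph n N := by
  funext p r
  simp [Ph, Matrix.map_apply, Matrix.add_apply]

lemma Ph_smul (c : K) (M : Matrix (Idx n) (Idx n) (FA n)) :
    Ph n (c • M) = c • Ph n M := by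
  funext p r
  exact map_smul (RingQuot.mkAlgHom K (Rel n)) c (M p r)

lemma Ph_ext (S : Matrix (Idx n) (Idx n) K) :
    Ph n (Rmatrix.ext n (FA n) S) = Rmatrix.ext n (D1 n) S := by
  funext p r
  exact AlgHom.commutes _ _

lemma Ph_m1x : Ph n (m1 n (FA n) (xF n)) = Xa n := by
  funext p r
  simp [Ph, m1, Matrix.map_apply, apply_ite (RingQuot.mkAlgHom K (Rel n)), Xa, XM, xF]

lemma Ph_m2x : Ph n (m2 n (FA n) (xF n)) = Xb n := by
  funext p r
  simp [Ph, m2, Matrix.map_apply, apply_ite (RingQuot.mkAlgHom K (Rel n)), Xb, XM, xF]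

lemma Ph_m1d : Ph n (m1 n (FA n) (dF n)) = Da n := by
  funext p r
  simp [Ph, m1, Matrix.map_apply, apply_ite (RingQuot.mkAlgHom K (Rel n)), Da, DM, dF]

lemma Ph_m2d : Ph n (m2 n (FA n) (dF n)) = Db n := by
  funext p r
  simp [Ph, m2, Matrix.map_apply, apply_ite (RingQuot.mkAlgHom K (Rel n)), Db, DM, dF]

lemma Ph_Om : Ph n (Om n (FA n)) = WW n := by
  funext p r
  simp [Ph, Om, WW, Matrix.map_apply, apply_ite (RingQuot.mkAlgHom K (Rel n))]

/-- lifted relation XX -/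
lemma relXX : SSm n * Xa n * RRm n * Xb n = Xb n * SSm n * Xa n * RRm n := by
  have h : Ph n (Rmatrix.ext n (FA n) (Rm21 n) * m1 n (FA n) (xF n) * Rmatrix.ext n (FA n) (Rm n) *
      m2 n (FA n) (xF n)) =
      Ph n (m2 n (FA n) (xF n) * Rmatrix.ext n (FA n) (Rm21 n) * m1 n (FA n) (xF n) *
      Rmatrix.ext n (FA n) (Rm n)) := by
    funext p r
    exact RingQuot.mkAlgHom_rel K (Rel.rXX p r)
  simpa only [Ph_mul, Ph_ext, Ph_m1x, Ph_m2x, ← RRm_def, ← SSm_def] using h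

/-- lifted relation DD -/
lemma relDD : RRi n * Da n * SSi n * Db n = Db n * RRi n * Da n * SSi n := by
  have h : Ph n (Rmatrix.ext n (FA n) (Rm n)⁻¹ * m1 n (FA n) (dF n) *
      Rmatrix.ext n (FA n) (Rm21 n)⁻¹ * m2 n (FA n) (dF n)) =
      Ph n (m2 n (FA n) (dF n) * Rmatrix.ext n (FA n) (Rm n)⁻¹ * m1 n (FA n) (dF n) *
      Rmatrix.ext n (FA n) (Rm21 n)⁻¹) := by
    funext p r
    exact RingQuot.mkAlgHom_rel K (Rel.rDD p r)
  rw [Rm_inv, Rm21_inv] at h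
  simpa only [Ph_mul, Ph_ext, Ph_m1d, Ph_m2d, ← RRi_def, ← SSi_def] using h

/-- lifted relation DX -/
lemma relDX : Da n * SSi n * Xb n * SSm n = RRm n * Xb n * SSm n * Da n + RRm n * CW n := by
  have h : Ph n (m1 n (FA n) (dF n) * Rmatrix.ext n (FA n) (Rm21 n)⁻¹ * m2 n (FA n) (xF n) *
      Rmatrix.ext n (FA n) (Rm21 n)) =
      Ph n (Rmatrix.ext n (FA n) (Rm n) * m2 n (FA n) (xF n) * Rmatrix.ext n (FA n) (Rm21 n) *
      m1 n (FA n) (dF n) +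
      (qq - qq⁻¹) • (Rmatrix.ext n (FA n) (Rm n) * Om n (FA n))) := by
    funext p r
    exact RingQuot.mkAlgHom_rel K (Rel.rDX p r)
  rw [Rm21_inv] at h
  simp only [Ph_mul, Ph_add, Ph_smul, Ph_ext, Ph_m1d, Ph_m2x, Ph_Om, ← RRm_def, ← RRi_def,
    ← SSm_def, ← SSi_def, ← WW_def] at h
  rw [CW_def, mul_smul_comm]
  exact h

end Spec
end Rmx

namespace Rmx
open Rmatrix Matrix Statement12

section Main
variable (n : ℕ)

/- inverse products over D1 -/
lemma RRmRRi : RRm n * RRi n = 1 := by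
  rw [RRm_def, RRi_def, ← ext_mul, Rm_mul_RmI, ext_one]
lemma RRiRRm : RRi n * RRm n = 1 := by
  rw [RRm_def, RRi_def, ← ext_mul, RmI_mul_Rm, ext_one]
lemma SSmSSi : SSm n * SSi n = 1 := by
  rw [SSm_def, SSi_def, ← ext_mul, Rm21_mul_Rm21I, ext_one]
lemma SSiSSm : SSi n * SSm n = 1 := by
  rw [SSm_def, SSi_def, ← ext_mul, Rm21I_mul_Rm21, ext_one]

/- cancellation T-forms -/
lemma cA (M : Matrix (Idx n) (Idx n) (D1 n)) : RRm n * (RRi n * M) = M := by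
  rw [← mul_assoc, RRmRRi, one_mul]
lemma cB (M : Matrix (Idx n) (Idx n) (D1 n)) : RRi n * (RRm n * M) = M := by
  rw [← mul_assoc, RRiRRm, one_mul]
lemma cC (M : Matrix (Idx n) (Idx n) (D1 n)) : SSm n * (SSi n * M) = M := by
  rw [← mul_assoc, SSmSSi, one_mul]
lemma cD (M : Matrix (Idx n) (Idx n) (D1 n)) : SSi n * (SSm n * M) = M := by
  rw [← mul_assoc, SSiSSm, one_mul]

/- Hecke relations over D1 -/
lemma ext_Pm : Rmatrix.ext n (D1 n) (Pm n) = Om n (D1 n) := by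
  funext p r
  simp [Rmatrix.ext, Pm, Om, Matrix.map_apply, apply_ite (algebraMap K (D1 n))]

lemma hck1 : RRm n = SSi n + CW n := by
  rw [RRm_def, hecke1, ext_add, ext_smul, ext_Pm, ← WW_def, ← CW_def, ← SSi_def]
lemma hck2 : SSm n = RRi n + CW n := by
  rw [SSm_def, hecke2, ext_add, ext_smul, ext_Pm, ← WW_def, ← CW_def, ← RRi_def]
lemma hck1' : CW n = RRm n - SSi n := by
  rw [hck1]; abel

/- swap conjugation values -/
lemma swm_RRm : swm n (D1 n) (RRm n) = SSm n := by
  rw [RRm_def, swm_ext, ← Rm21_eq, SSm_def]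
lemma swm_SSm : swm n (D1 n) (SSm n) = RRm n := by
  rw [SSm_def, swm_ext, Rm21_eq, Matrix.submatrix_submatrix, sw_sw,
    Matrix.submatrix_id_id, RRm_def]
lemma swm_RRi : swm n (D1 n) (RRi n) = SSi n := by
  rw [RRi_def, swm_ext, show (RmI n).submatrix (⇑(sw n)) (⇑(sw n)) = Rm21I n from rfl,
    SSi_def]
lemma swm_SSi : swm n (D1 n) (SSi n) = RRi n := by
  rw [SSi_def, swm_ext, show Rm21I n = (RmI n).submatrix (⇑(sw n)) (⇑(sw n)) from rfl,
    Matrix.submatrix_submatrix, sw_sw, Matrix.submatrix_id_id, RRi_def]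
lemma swm_WWv : swm n (D1 n) (WW n) = WW n := swm_Om n (D1 n)
lemma swm_CWv : swm n (D1 n) (CW n) = CW n := by
  have h : swm n (D1 n) (cc • WW n) = cc • swm n (D1 n) (WW n) := rfl
  rw [CW_def, h, swm_WWv]
lemma swm_Xav : swm n (D1 n) (Xa n) = Xb n := swm_m1 n (D1 n) (XM n)
lemma swm_Xbv : swm n (D1 n) (Xb n) = Xa n := swm_m2 n (D1 n) (XM n)
lemma swm_Dav : swm n (D1 n) (Da n) = Db n := swm_m1 n (D1 n) (DM n)
lemma swm_Dbv : swm n (D1 n) (Db n) = Da n := swm_m2 n (D1 n) (DM n)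
lemma swm_swm (M : Matrix (Idx n) (Idx n) (D1 n)) :
    swm n (D1 n) (swm n (D1 n) M) = M := by
  rw [swm, swm, Matrix.submatrix_submatrix, sw_sw, Matrix.submatrix_id_id]

/- commutation of CW -/
lemma cw_comm (M : Matrix (Idx n) (Idx n) (D1 n)) :
    CW n * M = swm n (D1 n) M * CW n := by
  rw [CW_def, WW_def, smul_mul_assoc, om_comm, mul_smul_comm]
lemma cw_comm' (M : Matrix (Idx n) (Idx n) (D1 n)) :
    M * CW n = CW n * swm n (D1 n) M := by
  have h := cw_comm n (swm n (D1 n) M)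
  rw [swm_swm] at h
  exact h.symm
lemma cw_commT (B M : Matrix (Idx n) (Idx n) (D1 n)) :
    CW n * (B * M) = swm n (D1 n) B * (CW n * M) := by
  rw [← mul_assoc, cw_comm, mul_assoc]
lemma cw_comm'T (B M : Matrix (Idx n) (Idx n) (D1 n)) :
    B * (CW n * M) = CW n * (swm n (D1 n) B * M) := by
  rw [← mul_assoc, cw_comm', mul_assoc]

/- relation T-forms -/
lemma relXXT (M : Matrix (Idx n) (Idx n) (D1 n)) :
    SSm n * (Xa n * (RRm n * (Xb n * M))) = Xb n * (SSm n * (Xa n * (RRm n * M))) := by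
  have h := congrArg (fun Z => Z * M) (relXX n)
  simpa only [mul_assoc] using h
lemma relXXp : SSm n * (Xa n * (RRm n * Xb n)) = Xb n * (SSm n * (Xa n * RRm n)) := by
  simpa only [mul_assoc] using relXX n

lemma relXXs : Xa n * RRm n * Xb n * SSm n = RRm n * Xb n * SSm n * Xa n := by
  have h := congrArg (swm n (D1 n)) (relXX n)
  simp only [swm_mul, swm_RRm, swm_SSm, swm_Xav, swm_Xbv] at h
  exact h.symm
lemma relXXsT (M : Matrix (Idx n) (Idx n) (D1 n)) :
    Xa n * (RRm n * (Xb n * (SSm n * M))) = RRm n * (Xb n * (SSm n * (Xa n * M))) := by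
  have h := congrArg (fun Z => Z * M) (relXXs n)
  simpa only [mul_assoc] using h

lemma relDDT (M : Matrix (Idx n) (Idx n) (D1 n)) :
    RRi n * (Da n * (SSi n * (Db n * M))) = Db n * (RRi n * (Da n * (SSi n * M))) := by
  have h := congrArg (fun Z => Z * M) (relDD n)
  simpa only [mul_assoc] using h

lemma relDXT (M : Matrix (Idx n) (Idx n) (D1 n)) :
    Da n * (SSi n * (Xb n * (SSm n * M)))
      = RRm n * (Xb n * (SSm n * (Da n * M))) + RRm n * (CW n * M) := by
  have h := congrArg (fun Z => Z * M) (relDX n)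
  simpa only [mul_assoc, add_mul] using h

lemma relDXs : Db n * RRi n * Xa n * RRm n = SSm n * Xa n * RRm n * Db n + SSm n * CW n := by
  have h := congrArg (swm n (D1 n)) (relDX n)
  simp only [swm_mul, swm_add, swm_RRm, swm_SSm, swm_RRi, swm_SSi, swm_Xav, swm_Xbv,
    swm_Dav, swm_Dbv, swm_CWv] at h
  exact h
lemma relDXsp : Db n * (RRi n * (Xa n * RRm n))
    = SSm n * (Xa n * (RRm n * Db n)) + SSm n * CW n := by
  simpa only [mul_assoc] using relDXs n

/- derived relations -/
lemma C1p : Da n * (SSi n * Xb n) = RRm n * (Xb n * (SSm n * (Da n * SSi n))) + CW n := by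
  have h := congrArg (fun Z => Z * SSi n) (relDX n)
  simp only [add_mul, mul_assoc] at h
  rw [SSmSSi, mul_one] at h
  rw [cw_comm n (SSi n), swm_SSi, cA] at h
  exact h
lemma C1T (M : Matrix (Idx n) (Idx n) (D1 n)) :
    Da n * (SSi n * (Xb n * M))
      = RRm n * (Xb n * (SSm n * (Da n * (SSi n * M)))) + CW n * M := by
  have h := congrArg (fun Z => Z * M) (C1p n)
  simpa only [mul_assoc, add_mul] using h

lemma C3p : SSi n * (Db n * (RRi n * Xa n))
    = Xa n * (RRm n * (Db n * RRi n)) + SSi n * CW n := by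
  have h := congrArg (fun Z => SSi n * (Z * RRi n)) (relDXs n)
  simp only [add_mul, mul_add, mul_assoc] at h
  rw [RRmRRi, mul_one] at h
  rw [cw_comm n (RRi n), swm_RRi] at h
  rw [cD, cD] at h
  exact h
lemma C3T (M : Matrix (Idx n) (Idx n) (D1 n)) :
    SSi n * (Db n * (RRi n * (Xa n * M)))
      = Xa n * (RRm n * (Db n * (RRi n * M))) + SSi n * (CW n * M) := by
  have h := congrArg (fun Z => Z * M) (C3p n)
  simpa only [mul_assoc, add_mul] using h

lemma b4p : Da n * (SSi n * Db n) = RRm n * (Db n * (RRi n * (Da n * SSi n))) := by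
  have h := congrArg (fun Z => RRm n * Z) (relDD n)
  simp only [mul_assoc] at h
  rw [cA] at h
  exact h

lemma b4sT (M : Matrix (Idx n) (Idx n) (D1 n)) :
    SSi n * (Db n * (RRi n * (Da n * M)))
      = SSi n * (RRi n * (Da n * (SSi n * (Db n * (SSm n * M))))) := by
  have h := relDDT n (SSm n * M)
  rw [cD] at h
  exact congrArg (fun Z => SSi n * Z) h.symm

lemma C5T (M : Matrix (Idx n) (Idx n) (D1 n)) :
    RRm n * (Xb n * (SSm n * (Da n * M)))
      = Da n * (SSi n * (Xb n * (SSm n * M))) - RRm n * (CW n * M) := by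
  rw [eq_sub_iff_add_eq]
  exact (relDXT n M).symm

lemma hCR : CW n * RRi n = 1 - SSi n * RRi n := by
  rw [hck1', sub_mul, RRmRRi]

/- matrices of LY and RY -/
lemma L1_eq : m1 n (D1 n) (LY n) = 1 + Xa n * Da n := by
  rw [LY, m1_add, m1_one, m1_mul, ← Xa_def, ← Da_def]
lemma L2_eq : m2 n (D1 n) (LY n) = 1 + Xb n * Db n := by
  rw [LY, m2_add, m2_one, m2_mul, ← Xb_def, ← Db_def]
lemma Y1_eq : m1 n (D1 n) (RY n) = 1 + Da n * Xa n := by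
  rw [RY, m1_add, m1_one, m1_mul, ← Xa_def, ← Da_def]
lemma Y2_eq : m2 n (D1 n) (RY n) = 1 + Db n * Xb n := by
  rw [RY, m2_add, m2_one, m2_mul, ← Xb_def, ← Db_def]

/- main identity (iii) -/
lemma main3 : m1 n (D1 n) (LY n) * SSi n * Xb n
    = RRm n * Xb n * SSm n * m1 n (D1 n) (LY n) * SSi n := by
  rw [L1_eq]
  simp only [mul_assoc, add_mul, mul_add, one_mul, mul_one]
  rw [C1p]
  simp only [mul_add, add_mul, mul_assoc]
  rw [relXXsT]
  rw [cw_comm' n (Xa n), swm_Xav]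
  rw [SSmSSi, mul_one]
  rw [hck1']
  simp only [mul_sub, sub_mul, mul_add, add_mul, mul_assoc, cA, cB, cC, cD, mul_one, one_mul]
  abel

/- main identity (iv) -/
lemma main4 : m1 n (D1 n) (LY n) * SSi n * Db n
    = SSi n * Db n * RRi n * m1 n (D1 n) (LY n) * SSi n := by
  rw [L1_eq]
  simp only [mul_assoc, add_mul, mul_add, one_mul, mul_one]
  rw [b4p]
  rw [C3T]
  rw [cw_commT n (Da n) (SSi n), swm_Dav]
  rw [cw_comm n (SSi n), swm_SSi]
  rw [hck1']
  simp only [mul_sub, sub_mul, mul_add, add_mul, mul_assoc, cA, cB, cC, cD,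
    RRmRRi, RRiRRm, SSmSSi, SSiSSm, mul_one, one_mul]
  abel

/- main identity (v) -/
lemma main5 : m1 n (D1 n) (RY n) * RRm n * Xb n
    = RRm n * Xb n * SSm n * m1 n (D1 n) (RY n) * RRm n := by
  rw [Y1_eq]
  simp only [mul_assoc, add_mul, mul_add, one_mul, mul_one]
  rw [C5T]
  rw [← relXXp]
  rw [cD]
  rw [cw_commT n (Xa n) (RRm n), swm_Xav]
  rw [cw_comm n (RRm n), swm_RRm]
  rw [hck1']
  simp only [mul_sub, sub_mul, mul_add, add_mul, mul_assoc, cA, cB, cC, cD,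
    RRmRRi, RRiRRm, SSmSSi, SSiSSm, mul_one, one_mul]
  abel

/- auxiliary fixed-point identity for (vi) -/
lemma haux : SSi n * (Db n * (RRi n * (Da n * (Xa n * RRm n))))
    = Da n * (Xa n * (RRm n * Db n)) + CW n * Db n := by
  set U := SSi n * (Db n * (RRi n * (Da n * (Xa n * RRm n)))) with hU
  have h2 : U = SSi n * (RRi n * (Da n * (Xa n * (RRm n * Db n))))
      + CW n * (RRi n * (SSi n * Db n))
      + CW n * (RRi n * U) := by
    conv_lhs =>
      rw [hU, b4sT, hck2]
      simp only [add_mul, mul_add, mul_assoc]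
      rw [relDXsp]
      simp only [mul_add, add_mul, mul_assoc]
      rw [cD, cD]
      rw [cw_comm' n (Da n), swm_Dav]
      rw [cw_comm'T n (RRi n) (Db n), swm_RRi]
      rw [cw_comm'T n (SSi n) (SSi n * Db n), swm_SSi]
      rw [cw_comm'T n (Db n) (Xa n * RRm n), swm_Dbv]
      rw [cw_comm'T n (SSi n) (Da n * (Xa n * RRm n)), swm_SSi]
      rw [cw_comm'T n (Da n) (RRi n * (Da n * (Xa n * RRm n))), swm_Dav]
      rw [cw_comm'T n (RRi n) (Db n * (RRi n * (Da n * (Xa n * RRm n)))), swm_RRi]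
      rw [cw_comm'T n (SSi n) (SSi n * (Db n * (RRi n * (Da n * (Xa n * RRm n))))), swm_SSi]
  have h4 : SSi n * RRi n * U = SSi n * (RRi n * (Da n * (Xa n * (RRm n * Db n))))
      + CW n * (RRi n * (SSi n * Db n)) := by
    have e1 : U - CW n * (RRi n * U) = SSi n * RRi n * U := by
      rw [← mul_assoc (CW n), hCR, sub_mul, one_mul]
      abel
    rw [← e1]
    nth_rewrite 1 [h2]
    abel
  have h5 := congrArg (fun Z => RRm n * (SSm n * Z)) h4
  simp only [mul_add, mul_assoc, cA, cB, cC, cD] at h5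
  rw [cw_comm'T n (SSm n) (RRi n * (SSi n * Db n)), swm_SSm] at h5
  simp only [cA, cB, cC, cD] at h5
  rw [cw_commT n (SSi n) (Db n), swm_SSi] at h5
  simp only [cA, cB, cC, cD] at h5
  exact h5

/- main identity (vi) -/
lemma main6 : m1 n (D1 n) (RY n) * RRm n * Db n
    = SSi n * Db n * RRi n * m1 n (D1 n) (RY n) * RRm n := by
  rw [Y1_eq]
  simp only [mul_assoc, add_mul, mul_add, one_mul, mul_one]
  rw [RRiRRm, mul_one]
  rw [haux]
  rw [hck1']
  simp only [sub_mul]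
  abel

/- T-forms of the main identities -/
lemma m3T (M : Matrix (Idx n) (Idx n) (D1 n)) :
    m1 n (D1 n) (LY n) * (SSi n * (Xb n * M))
      = RRm n * (Xb n * (SSm n * (m1 n (D1 n) (LY n) * (SSi n * M)))) := by
  have h := congrArg (fun Z => Z * M) (main3 n)
  simpa only [mul_assoc] using h
lemma m4p : m1 n (D1 n) (LY n) * (SSi n * Db n)
    = SSi n * (Db n * (RRi n * (m1 n (D1 n) (LY n) * SSi n))) := by
  simpa only [mul_assoc] using main4 n
lemma m5p : m1 n (D1 n) (RY n) * (RRm n * Xb n)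
    = RRm n * (Xb n * (SSm n * (m1 n (D1 n) (RY n) * RRm n))) := by
  simpa only [mul_assoc] using main5 n
lemma m6T (M : Matrix (Idx n) (Idx n) (D1 n)) :
    m1 n (D1 n) (RY n) * (RRm n * (Db n * M))
      = SSi n * (Db n * (RRi n * (m1 n (D1 n) (RY n) * (RRm n * M)))) := by
  have h := congrArg (fun Z => Z * M) (main6 n)
  simpa only [mul_assoc] using h

/- main identity (i) -/
lemma main1 : RRi n * m1 n (D1 n) (LY n) * SSi n * m2 n (D1 n) (LY n)
    = m2 n (D1 n) (LY n) * RRi n * m1 n (D1 n) (LY n) * SSi n := by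
  rw [L2_eq]
  simp only [mul_assoc, add_mul, mul_add, one_mul, mul_one]
  rw [m3T]
  rw [m4p]
  simp only [cA, cB, cC, cD, mul_assoc]

/- main identity (ii) -/
lemma main2 : SSm n * m1 n (D1 n) (RY n) * RRm n * m2 n (D1 n) (RY n)
    = m2 n (D1 n) (RY n) * SSm n * m1 n (D1 n) (RY n) * RRm n := by
  rw [Y2_eq]
  simp only [mul_assoc, add_mul, mul_add, one_mul, mul_one]
  rw [m6T]
  rw [m5p]
  simp only [cA, cB, cC, cD, mul_assoc]

end Main
end Rmx

/--
In `D_1`, with `^LỸ = I + XD` and `^RY = I + DX`, the following hold: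
(i) `R⁻¹ (^LỸ)₁ R₂₁⁻¹ (^LỸ)₂ = (^LỸ)₂ R⁻¹ (^LỸ)₁ R₂₁⁻¹`;
(ii) `R₂₁ (^RY)₁ R (^RY)₂ = (^RY)₂ R₂₁ (^RY)₁ R`;
(iii) `(^LỸ)₁ R₂₁⁻¹ X₂ = R X₂ R₂₁ (^LỸ)₁ R₂₁⁻¹`;
(iv) `(^LỸ)₁ R₂₁⁻¹ D₂ = R₂₁⁻¹ D₂ R⁻¹ (^LỸ)₁ R₂₁⁻¹`;
(v) `(^RY)₁ R X₂ = R X₂ R₂₁ (^RY)₁ R`;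
(vi) `(^RY)₁ R D₂ = R₂₁⁻¹ D₂ R⁻¹ (^RY)₁ R`.
-/
theorem statement_12 (hn : 1 ≤ n) :
    (ext n (D1 n) (Rm n)⁻¹ * m1 n (D1 n) (LY n) * ext n (D1 n) (Rm21 n)⁻¹ * m2 n (D1 n) (LY n)
      = m2 n (D1 n) (LY n) * ext n (D1 n) (Rm n)⁻¹ * m1 n (D1 n) (LY n) *
          ext n (D1 n) (Rm21 n)⁻¹) ∧
    (ext n (D1 n) (Rm21 n) * m1 n (D1 n) (RY n) * ext n (D1 n) (Rm n) * m2 n (D1 n) (RY n)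
      = m2 n (D1 n) (RY n) * ext n (D1 n) (Rm21 n) * m1 n (D1 n) (RY n) *
          ext n (D1 n) (Rm n)) ∧
    (m1 n (D1 n) (LY n) * ext n (D1 n) (Rm21 n)⁻¹ * m2 n (D1 n) (XM n)
      = ext n (D1 n) (Rm n) * m2 n (D1 n) (XM n) * ext n (D1 n) (Rm21 n) *
          m1 n (D1 n) (LY n) * ext n (D1 n) (Rm21 n)⁻¹) ∧
    (m1 n (D1 n) (LY n) * ext n (D1 n) (Rm21 n)⁻¹ * m2 n (D1 n) (DM n)
      = ext n (D1 n) (Rm21 n)⁻¹ * m2 n (D1 n) (DM n) * ext n (D1 n) (Rm n)⁻¹ *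
          m1 n (D1 n) (LY n) * ext n (D1 n) (Rm21 n)⁻¹) ∧
    (m1 n (D1 n) (RY n) * ext n (D1 n) (Rm n) * m2 n (D1 n) (XM n)
      = ext n (D1 n) (Rm n) * m2 n (D1 n) (XM n) * ext n (D1 n) (Rm21 n) *
          m1 n (D1 n) (RY n) * ext n (D1 n) (Rm n)) ∧
    (m1 n (D1 n) (RY n) * ext n (D1 n) (Rm n) * m2 n (D1 n) (DM n)
      = ext n (D1 n) (Rm21 n)⁻¹ * m2 n (D1 n) (DM n) * ext n (D1 n) (Rm n)⁻¹ *
          m1 n (D1 n) (RY n) * ext n (D1 n) (Rm n)) := by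
  rw [Rmx.Rm_inv, Rmx.Rm21_inv]
  exact ⟨Rmx.main1 n, Rmx.main2 n, Rmx.main3 n, Rmx.main4 n, Rmx.main5 n, Rmx.main6 n⟩

end Statement12
end
end

section
/- For ℓ ≥ 0 and any c_+, c_- ∈ 𝕂^×, the quotient of the shifted quantum toroidal algebra U^ℓ_{q,t}(gl̈_1) by the two-sided ideal generated by ψ_0^+ − c_+ and ψ_ℓ^- − c_- is generated as a 𝕂-algebra by the images of e_0, f_0, the ψ_s^+ for s ≥ 0, the ψ_s^- for s ≤ ℓ, and (ψ_0^+)^{−1}, (ψ_ℓ^-)^{−1}. -/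
noncomputable section
open scoped BigOperators

namespace Toroidal

variable (k : Type) [Field k] (q t : k)

/-- Generators of the shifted quantum toroidal algebra `U^ℓ_{q,t}(gl̈_1)`:
`e_r`, `f_r` (`r ∈ ℤ`), `ψ⁺_s` (`s ≥ 0`), `ψ⁻_{ℓ-j}` (`j ≥ 0`, i.e. `ψ⁻_s` for `s ≤ ℓ`),
and the inverses of `ψ⁺_0` and `ψ⁻_ℓ`. -/
inductive Gen (ℓ : ℕ) : Type
  | e : ℤ → Gen ℓ
  | f : ℤ → Gen ℓ
  | pp : ℕ → Gen ℓ
  | pm : ℕ → Gen ℓ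
  | ppi : Gen ℓ
  | pmi : Gen ℓ

abbrev F (ℓ : ℕ) := FreeAlgebra k (Gen ℓ)

variable (ℓ : ℕ)

def eF (r : ℤ) : F k ℓ := FreeAlgebra.ι k (Gen.e r)
def fF (r : ℤ) : F k ℓ := FreeAlgebra.ι k (Gen.f r)
/-- `ψ⁺_s` for `s ∈ ℤ`, extended by `0` for `s < 0`. -/
def pP (s : ℤ) : F k ℓ := if 0 ≤ s then FreeAlgebra.ι k (Gen.pp s.toNat) else 0
/-- `ψ⁻_s` for `s ∈ ℤ`, extended by `0` for `s > ℓ`. -/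
def pM (s : ℤ) : F k ℓ :=
  if s ≤ (ℓ : ℤ) then FreeAlgebra.ι k (Gen.pm ((ℓ : ℤ) - s).toNat) else 0

/-- `q² + t² + q⁻²t⁻²`, the first elementary symmetric function of the roots of the
structure polynomial. -/
def c1 : k := q ^ 2 + t ^ 2 + (q ^ 2 * t ^ 2)⁻¹
/-- `q²t² + t⁻² + q⁻²`, the second elementary symmetric function. -/
def c2 : k := q ^ 2 * t ^ 2 + (t ^ 2)⁻¹ + (q ^ 2)⁻¹
/-- The constant `((1−q²)(1−t²)(1−q⁻²t⁻²))⁻¹`. -/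
def c0 : k := ((1 - q ^ 2) * (1 - t ^ 2) * (1 - (q ^ 2 * t ^ 2)⁻¹))⁻¹

/-- The commutator `[x, y] = xy − yx`. -/
def br {A : Type} [Ring A] (x y : A) : A := x * y - y * x

/-- The defining relations of the shifted quantum toroidal algebra `U^ℓ_{q,t}(gl̈_1)`,
obtained by equating coefficients in the current relations. -/
inductive Rel : F k ℓ → F k ℓ → Prop
  | ppcomm (s s' : ℤ) : Rel (pP k ℓ s * pP k ℓ s') (pP k ℓ s' * pP k ℓ s)
  | pmcomm (s s' : ℤ) : Rel (pP k ℓ s * pM k ℓ s') (pM k ℓ s' * pP k ℓ s)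
  | mpcomm (s s' : ℤ) : Rel (pM k ℓ s * pP k ℓ s') (pP k ℓ s' * pM k ℓ s)
  | mmcomm (s s' : ℤ) : Rel (pM k ℓ s * pM k ℓ s') (pM k ℓ s' * pM k ℓ s)
  | ppinv1 : Rel (FreeAlgebra.ι k (Gen.pp 0) * FreeAlgebra.ι k (Gen.ppi : Gen ℓ)) 1
  | ppinv2 : Rel (FreeAlgebra.ι k (Gen.ppi : Gen ℓ) * FreeAlgebra.ι k (Gen.pp 0)) 1
  | pminv1 : Rel (FreeAlgebra.ι k (Gen.pm 0) * FreeAlgebra.ι k (Gen.pmi : Gen ℓ)) 1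
  | pminv2 : Rel (FreeAlgebra.ι k (Gen.pmi : Gen ℓ) * FreeAlgebra.ι k (Gen.pm 0)) 1
  | ee (m j : ℤ) :
      Rel (eF k ℓ (m + 3) * eF k ℓ j - c1 k q t • (eF k ℓ (m + 2) * eF k ℓ (j + 1))
            + c2 k q t • (eF k ℓ (m + 1) * eF k ℓ (j + 2)) - eF k ℓ m * eF k ℓ (j + 3))
          (eF k ℓ j * eF k ℓ (m + 3) - c2 k q t • (eF k ℓ (j + 1) * eF k ℓ (m + 2))
            + c1 k q t • (eF k ℓ (j + 2) * eF k ℓ (m + 1)) - eF k ℓ (j + 3) * eF k ℓ m)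
  | ff (m j : ℤ) :
      Rel (fF k ℓ (m + 3) * fF k ℓ j - c2 k q t • (fF k ℓ (m + 2) * fF k ℓ (j + 1))
            + c1 k q t • (fF k ℓ (m + 1) * fF k ℓ (j + 2)) - fF k ℓ m * fF k ℓ (j + 3))
          (fF k ℓ j * fF k ℓ (m + 3) - c1 k q t • (fF k ℓ (j + 1) * fF k ℓ (m + 2))
            + c2 k q t • (fF k ℓ (j + 2) * fF k ℓ (m + 1)) - fF k ℓ (j + 3) * fF k ℓ m)
  | pe (s m : ℤ) :
      Rel (pP k ℓ (s + 3) * eF k ℓ m - c1 k q t • (pP k ℓ (s + 2) * eF k ℓ (m + 1))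
            + c2 k q t • (pP k ℓ (s + 1) * eF k ℓ (m + 2)) - pP k ℓ s * eF k ℓ (m + 3))
          (eF k ℓ m * pP k ℓ (s + 3) - c2 k q t • (eF k ℓ (m + 1) * pP k ℓ (s + 2))
            + c1 k q t • (eF k ℓ (m + 2) * pP k ℓ (s + 1)) - eF k ℓ (m + 3) * pP k ℓ s)
  | me (s m : ℤ) :
      Rel (pM k ℓ (s + 3) * eF k ℓ m - c1 k q t • (pM k ℓ (s + 2) * eF k ℓ (m + 1))
            + c2 k q t • (pM k ℓ (s + 1) * eF k ℓ (m + 2)) - pM k ℓ s * eF k ℓ (m + 3))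
          (eF k ℓ m * pM k ℓ (s + 3) - c2 k q t • (eF k ℓ (m + 1) * pM k ℓ (s + 2))
            + c1 k q t • (eF k ℓ (m + 2) * pM k ℓ (s + 1)) - eF k ℓ (m + 3) * pM k ℓ s)
  | pf (s m : ℤ) :
      Rel (pP k ℓ (s + 3) * fF k ℓ m - c2 k q t • (pP k ℓ (s + 2) * fF k ℓ (m + 1))
            + c1 k q t • (pP k ℓ (s + 1) * fF k ℓ (m + 2)) - pP k ℓ s * fF k ℓ (m + 3))
          (fF k ℓ m * pP k ℓ (s + 3) - c1 k q t • (fF k ℓ (m + 1) * pP k ℓ (s + 2))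
            + c2 k q t • (fF k ℓ (m + 2) * pP k ℓ (s + 1)) - fF k ℓ (m + 3) * pP k ℓ s)
  | mf (s m : ℤ) :
      Rel (pM k ℓ (s + 3) * fF k ℓ m - c2 k q t • (pM k ℓ (s + 2) * fF k ℓ (m + 1))
            + c1 k q t • (pM k ℓ (s + 1) * fF k ℓ (m + 2)) - pM k ℓ s * fF k ℓ (m + 3))
          (fF k ℓ m * pM k ℓ (s + 3) - c1 k q t • (fF k ℓ (m + 1) * pM k ℓ (s + 2))
            + c2 k q t • (fF k ℓ (m + 2) * pM k ℓ (s + 1)) - fF k ℓ (m + 3) * pM k ℓ s)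
  | ef (r s : ℤ) :
      Rel (eF k ℓ r * fF k ℓ s - fF k ℓ s * eF k ℓ r)
          (c0 k q t • (pP k ℓ (r + s) - pM k ℓ (r + s)))
  | serreE (a b c : ℤ) :
      Rel (∑ σ : Equiv.Perm (Fin 3),
            br (eF k ℓ (![a, b, c] (σ 0)))
               (br (eF k ℓ (![a, b, c] (σ 1) + 1)) (eF k ℓ (![a, b, c] (σ 2) - 1)))) 0
  | serreF (a b c : ℤ) :
      Rel (∑ σ : Equiv.Perm (Fin 3),
            br (fF k ℓ (![a, b, c] (σ 0)))
               (br (fF k ℓ (![a, b, c] (σ 1) + 1)) (fF k ℓ (![a, b, c] (σ 2) - 1)))) 0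

/-- The shifted quantum toroidal algebra `U^ℓ_{q,t}(gl̈_1)`. -/
abbrev UT := RingQuot (Rel k q t ℓ)

variable (cp cm : kˣ)

/-- The relations `ψ⁺_0 = c₊`, `ψ⁻_ℓ = c₋` defining the central reduction. -/
inductive SRel : UT k q t ℓ → UT k q t ℓ → Prop
  | cplus : SRel (RingQuot.mkAlgHom k (Rel k q t ℓ) (FreeAlgebra.ι k (Gen.pp 0)))
      (algebraMap k (UT k q t ℓ) (cp : k))
  | cminus : SRel (RingQuot.mkAlgHom k (Rel k q t ℓ) (FreeAlgebra.ι k (Gen.pm 0)))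
      (algebraMap k (UT k q t ℓ) (cm : k))

/-- The quotient of `U^ℓ_{q,t}(gl̈_1)` by the two-sided ideal generated by
`ψ⁺_0 − c₊` and `ψ⁻_ℓ − c₋`. -/
abbrev QT := RingQuot (SRel k q t ℓ cp cm)

/-- The canonical map from the free algebra to the central reduction. -/
def π : F k ℓ →ₐ[k] QT k q t ℓ cp cm :=
  (RingQuot.mkAlgHom k (SRel k q t ℓ cp cm)).comp (RingQuot.mkAlgHom k (Rel k q t ℓ))

end Toroidal

namespace Statement15

open Toroidal

/-- The field `𝕂 = ℂ(q,t)`. -/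
abbrev 𝕂 : Type := FractionRing (MvPolynomial (Fin 2) ℂ)

/-- The parameter `q`. -/
def qe : 𝕂 := algebraMap (MvPolynomial (Fin 2) ℂ) 𝕂 (MvPolynomial.X 0)
/-- The parameter `t`. -/
def te : 𝕂 := algebraMap (MvPolynomial (Fin 2) ℂ) 𝕂 (MvPolynomial.X 1)

set_option maxHeartbeats 4000000
set_option synthInstance.maxHeartbeats 1000000

-- ===== helpers =====
lemma qe_ne : qe ≠ 0 := by
  simp only [qe, ne_eq, map_eq_zero_iff _ (IsFractionRing.injective (MvPolynomial (Fin 2) ℂ) 𝕂)]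
  exact MvPolynomial.X_ne_zero 0

lemma te_ne : te ≠ 0 := by
  simp only [te, ne_eq, map_eq_zero_iff _ (IsFractionRing.injective (MvPolynomial (Fin 2) ℂ) 𝕂)]
  exact MvPolynomial.X_ne_zero 1

lemma cdiff_ne : c2 𝕂 qe te - c1 𝕂 qe te ≠ 0 := by
  have hq := qe_ne
  have ht := te_ne
  set P : MvPolynomial (Fin 2) ℂ :=
    (MvPolynomial.X 0) ^ 4 * (MvPolynomial.X 1) ^ 4 + (MvPolynomial.X 0) ^ 2
      + (MvPolynomial.X 1) ^ 2 - (MvPolynomial.X 0) ^ 4 * (MvPolynomial.X 1) ^ 2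
      - (MvPolynomial.X 0) ^ 2 * (MvPolynomial.X 1) ^ 4 - 1 with hP
  have hPne : P ≠ 0 := by
    intro h0
    have := congrArg (MvPolynomial.eval (![2, 3] : Fin 2 → ℂ)) h0
    simp [hP] at this
    norm_num at this
  have hmap : algebraMap (MvPolynomial (Fin 2) ℂ) 𝕂 P ≠ 0 := by
    simpa [ne_eq, map_eq_zero_iff _ (IsFractionRing.injective (MvPolynomial (Fin 2) ℂ) 𝕂)]
      using hPne
  have hfac : (c2 𝕂 qe te - c1 𝕂 qe te) * (qe ^ 2 * te ^ 2) =
      algebraMap (MvPolynomial (Fin 2) ℂ) 𝕂 P := by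
    simp only [hP, map_sub, map_add, map_mul, map_pow, map_one, c1, c2, qe, te]
    field_simp
    ring
  intro h
  rw [h, zero_mul] at hfac
  exact hmap hfac.symm

variable (ℓ : ℕ) (cp cm : 𝕂ˣ)

lemma π_apply (x : F 𝕂 ℓ) :
    RingQuot.mkAlgHom 𝕂 (SRel 𝕂 qe te ℓ cp cm) (RingQuot.mkAlgHom 𝕂 (Rel 𝕂 qe te ℓ) x)
      = π 𝕂 qe te ℓ cp cm x := rfl

lemma hpp0 : π 𝕂 qe te ℓ cp cm (FreeAlgebra.ι 𝕂 (Gen.pp 0)) =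
    algebraMap 𝕂 (QT 𝕂 qe te ℓ cp cm) (cp : 𝕂) := by
  have h := RingQuot.mkAlgHom_rel 𝕂 (SRel.cplus (k := 𝕂) (q := qe) (t := te) (ℓ := ℓ)
    (cp := cp) (cm := cm))
  rw [π_apply] at h
  simpa using h

lemma hpm0 : π 𝕂 qe te ℓ cp cm (FreeAlgebra.ι 𝕂 (Gen.pm 0)) =
    algebraMap 𝕂 (QT 𝕂 qe te ℓ cp cm) (cm : 𝕂) := by
  have h := RingQuot.mkAlgHom_rel 𝕂 (SRel.cminus (k := 𝕂) (q := qe) (t := te) (ℓ := ℓ)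
    (cp := cp) (cm := cm))
  rw [π_apply] at h
  simpa using h

-- smul conversion at the free-algebra level (instances are concrete there)
lemma F_smul_def (a : 𝕂) (y : F 𝕂 ℓ) : a • y = algebraMap 𝕂 (F 𝕂 ℓ) a * y :=
  Algebra.smul_def a y

lemma alg_cancel (A : Subalgebra 𝕂 (QT 𝕂 qe te ℓ cp cm)) {c : 𝕂} (hc : c ≠ 0)
    {x : QT 𝕂 qe te ℓ cp cm} (h : algebraMap 𝕂 (QT 𝕂 qe te ℓ cp cm) c * x ∈ A) : x ∈ A := by
  have h2 : algebraMap 𝕂 (QT 𝕂 qe te ℓ cp cm) c⁻¹ *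
      (algebraMap 𝕂 (QT 𝕂 qe te ℓ cp cm) c * x) ∈ A := A.mul_mem (A.algebraMap_mem _) h
  rwa [← mul_assoc, ← map_mul, inv_mul_cancel₀ hc, map_one, one_mul] at h2

-- cancel a common additive term using multiplication by algebraMap (-1)
lemma neg_trick (x : QT 𝕂 qe te ℓ cp cm) :
    algebraMap 𝕂 (QT 𝕂 qe te ℓ cp cm) (-1 : 𝕂) * x + x = 0 := by
  have h1 : algebraMap 𝕂 (QT 𝕂 qe te ℓ cp cm) (-1 : 𝕂) * x
      + algebraMap 𝕂 (QT 𝕂 qe te ℓ cp cm) (1 : 𝕂) * x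
      = algebraMap 𝕂 (QT 𝕂 qe te ℓ cp cm) ((-1 : 𝕂) + 1) * x := by
    rw [map_add, add_mul]
  rw [map_one, one_mul] at h1
  rw [h1, show ((-1 : 𝕂) + 1) = 0 by ring, map_zero, zero_mul]

lemma extract (A : Subalgebra 𝕂 (QT 𝕂 qe te ℓ cp cm)) {p v q w : QT 𝕂 qe te ℓ cp cm}
    (h : p + w + v = q + w) (hp : p ∈ A) (hq : q ∈ A) : v ∈ A := by
  set B := algebraMap 𝕂 (QT 𝕂 qe te ℓ cp cm) with hB
  have hv : v = B (-1) * p + q := by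
    calc v = 0 + v := (zero_add v).symm
      _ = (B (-1) * (p + w) + (p + w)) + v := by rw [neg_trick]
      _ = B (-1) * (p + w) + (p + w + v) := by rw [add_assoc]
      _ = B (-1) * (p + w) + (q + w) := by rw [h]
      _ = (B (-1) * p + B (-1) * w) + (q + w) := by rw [mul_add]
      _ = B (-1) * p + (B (-1) * w + (q + w)) := by rw [add_assoc]
      _ = B (-1) * p + ((B (-1) * w + q) + w) := by rw [← add_assoc (B (-1) * w) q w]
      _ = B (-1) * p + ((q + B (-1) * w) + w) := by rw [add_comm (B (-1) * w) q]
      _ = B (-1) * p + (q + (B (-1) * w + w)) := by rw [add_assoc q]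
      _ = B (-1) * p + (q + 0) := by rw [neg_trick]
      _ = B (-1) * p + q := by rw [add_zero]
  rw [hv]
  exact A.add_mem (A.mul_mem (A.algebraMap_mem _) hp) hq

lemma up_e (A : Subalgebra 𝕂 (QT 𝕂 qe te ℓ cp cm))
    (h1 : π 𝕂 qe te ℓ cp cm (FreeAlgebra.ι 𝕂 (Gen.pp 1)) ∈ A) (m : ℤ)
    (hm : π 𝕂 qe te ℓ cp cm (eF 𝕂 ℓ m) ∈ A) :
    π 𝕂 qe te ℓ cp cm (eF 𝕂 ℓ (m + 1)) ∈ A := by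
  have hrel := congrArg (RingQuot.mkAlgHom 𝕂 (SRel 𝕂 qe te ℓ cp cm))
    (RingQuot.mkAlgHom_rel 𝕂 (@Rel.pe 𝕂 _ qe te ℓ (-2) m))
  have e1 : pP 𝕂 ℓ (-2 + 3) = FreeAlgebra.ι 𝕂 (Gen.pp 1) := by norm_num [pP]
  have e2 : pP 𝕂 ℓ (-2 + 2) = FreeAlgebra.ι 𝕂 (Gen.pp 0) := by norm_num [pP]
  have e3 : pP 𝕂 ℓ (-2 + 1) = 0 := by norm_num [pP]
  have e4 : pP 𝕂 ℓ (-2 : ℤ) = 0 := by norm_num [pP]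
  rw [e1, e2, e3, e4] at hrel
  simp only [π_apply] at hrel
  -- clean zeros and smul at the free-algebra level
  simp only [F_smul_def, zero_mul, mul_zero, add_zero, sub_zero] at hrel
  -- hrel : π (pp1 * em - algC1 * (pp0 * e1)) = π (em * pp1 - algC2 * (e1 * pp0))
  set B := algebraMap 𝕂 (QT 𝕂 qe te ℓ cp cm) with hB
  set Pi := π 𝕂 qe te ℓ cp cm with hPi
  set pp1 := FreeAlgebra.ι 𝕂 (Gen.pp 1 : Gen ℓ) with hpp1
  set pp0 := FreeAlgebra.ι 𝕂 (Gen.pp 0 : Gen ℓ) with hpp0'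
  set em := eF 𝕂 ℓ m with hem
  set e1' := eF 𝕂 ℓ (m + 1) with he1'
  set aC1 := algebraMap 𝕂 (F 𝕂 ℓ) (c1 𝕂 qe te) with haC1
  set aC2 := algebraMap 𝕂 (F 𝕂 ℓ) (c2 𝕂 qe te) with haC2
  -- free-algebra identities adding back the subtracted terms
  have hFL : (pp1 * em - aC1 * (pp0 * e1')) + aC1 * (pp0 * e1') = pp1 * em := by
    rw [sub_add_cancel]
  have hFR : (em * pp1 - aC2 * (e1' * pp0)) + aC2 * (e1' * pp0) = em * pp1 := by
    rw [sub_add_cancel]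
  have hπL : Pi (pp1 * em - aC1 * (pp0 * e1')) + Pi (aC1 * (pp0 * e1')) = Pi (pp1 * em) := by
    rw [← map_add]; exact congrArg Pi hFL
  have hπR : Pi (em * pp1 - aC2 * (e1' * pp0)) + Pi (aC2 * (e1' * pp0)) = Pi (em * pp1) := by
    rw [← map_add]; exact congrArg Pi hFR
  have heq : Pi (pp1 * em) + Pi (aC2 * (e1' * pp0)) = Pi (em * pp1) + Pi (aC1 * (pp0 * e1')) := by
    rw [← hπL, ← hπR, hrel, add_right_comm]
  -- now compute the ψ⁺₀-terms
  have hw : Pi (aC1 * (pp0 * e1')) = B (c1 𝕂 qe te * cp) * Pi e1' := by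
    rw [map_mul, map_mul, hPi, haC1, AlgHom.commutes, hpp0' , hpp0, ← hPi, ← hB, ← mul_assoc,
      ← map_mul]
  have hw' : Pi (aC2 * (e1' * pp0)) =
      B (c1 𝕂 qe te * cp) * Pi e1' + B ((c2 𝕂 qe te - c1 𝕂 qe te) * cp) * Pi e1' := by
    have step : Pi (aC2 * (e1' * pp0)) = B (c2 𝕂 qe te * cp) * Pi e1' := by
      rw [map_mul, map_mul, hPi, haC2, AlgHom.commutes, hpp0', hpp0, ← hPi, ← hB,
        ← Algebra.commutes ((cp : 𝕂)) (Pi e1'), ← mul_assoc, ← map_mul]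
    rw [step, ← add_mul, ← map_add, show c1 𝕂 qe te * (cp : 𝕂)
      + (c2 𝕂 qe te - c1 𝕂 qe te) * (cp : 𝕂) = c2 𝕂 qe te * (cp : 𝕂) by ring]
  rw [hw, hw', ← add_assoc] at heq
  -- extract the top term
  have hv : B ((c2 𝕂 qe te - c1 𝕂 qe te) * cp) * Pi e1' ∈ A :=
    extract ℓ cp cm A heq (by rw [map_mul]; exact A.mul_mem h1 hm)
      (by rw [map_mul]; exact A.mul_mem hm h1)
  exact alg_cancel ℓ cp cm A (mul_ne_zero cdiff_ne cp.ne_zero) hv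


lemma down_e (A : Subalgebra 𝕂 (QT 𝕂 qe te ℓ cp cm))
    (h1 : π 𝕂 qe te ℓ cp cm (FreeAlgebra.ι 𝕂 (Gen.pm 1)) ∈ A) (m : ℤ)
    (hm : π 𝕂 qe te ℓ cp cm (eF 𝕂 ℓ (m + 1)) ∈ A) :
    π 𝕂 qe te ℓ cp cm (eF 𝕂 ℓ m) ∈ A := by
  have hrel := congrArg (RingQuot.mkAlgHom 𝕂 (SRel 𝕂 qe te ℓ cp cm))
    (RingQuot.mkAlgHom_rel 𝕂 (@Rel.me 𝕂 _ qe te ℓ ((ℓ : ℤ) - 1) (m - 2)))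
  have g1 : pM 𝕂 ℓ ((ℓ : ℤ) - 1 + 3) = 0 := by unfold pM; rw [if_neg (by omega)]
  have g2 : pM 𝕂 ℓ ((ℓ : ℤ) - 1 + 2) = 0 := by unfold pM; rw [if_neg (by omega)]
  have g3 : pM 𝕂 ℓ ((ℓ : ℤ) - 1 + 1) = FreeAlgebra.ι 𝕂 (Gen.pm 0) := by
    unfold pM
    rw [if_pos (by omega), show ((ℓ : ℤ) - ((ℓ : ℤ) - 1 + 1)).toNat = 0 from by omega]
  have g4 : pM 𝕂 ℓ ((ℓ : ℤ) - 1) = FreeAlgebra.ι 𝕂 (Gen.pm 1) := by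
    unfold pM
    rw [if_pos (by omega), show ((ℓ : ℤ) - ((ℓ : ℤ) - 1)).toNat = 1 from by omega]
  have ec : eF 𝕂 ℓ (m - 2 + 2) = eF 𝕂 ℓ m := congrArg (eF 𝕂 ℓ) (by ring)
  have ed : eF 𝕂 ℓ (m - 2 + 3) = eF 𝕂 ℓ (m + 1) := congrArg (eF 𝕂 ℓ) (by ring)
  rw [g1, g2, g3, g4, ec, ed] at hrel
  simp only [π_apply] at hrel
  simp only [F_smul_def, zero_mul, mul_zero, sub_zero, zero_add, add_zero] at hrel
  set B := algebraMap 𝕂 (QT 𝕂 qe te ℓ cp cm) with hB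
  set Pi := π 𝕂 qe te ℓ cp cm with hPi
  set pm1 := FreeAlgebra.ι 𝕂 (Gen.pm 1 : Gen ℓ) with hpm1'
  set pm0 := FreeAlgebra.ι 𝕂 (Gen.pm 0 : Gen ℓ) with hpm0'
  set e2 := eF 𝕂 ℓ m with he2
  set e3 := eF 𝕂 ℓ (m + 1) with he3
  set aC1 := algebraMap 𝕂 (F 𝕂 ℓ) (c1 𝕂 qe te) with haC1
  set aC2 := algebraMap 𝕂 (F 𝕂 ℓ) (c2 𝕂 qe te) with haC2
  -- hrel : Pi (aC2 * (pm0 * e2) - pm1 * e3) = Pi (aC1 * (e2 * pm0) - e3 * pm1)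
  have hFL : (aC2 * (pm0 * e2) - pm1 * e3) + pm1 * e3 = aC2 * (pm0 * e2) := by
    rw [sub_add_cancel]
  have hFR : (aC1 * (e2 * pm0) - e3 * pm1) + e3 * pm1 = aC1 * (e2 * pm0) := by
    rw [sub_add_cancel]
  have hπL : Pi (aC2 * (pm0 * e2) - pm1 * e3) + Pi (pm1 * e3) = Pi (aC2 * (pm0 * e2)) := by
    rw [← map_add]; exact congrArg Pi hFL
  have hπR : Pi (aC1 * (e2 * pm0) - e3 * pm1) + Pi (e3 * pm1) = Pi (aC1 * (e2 * pm0)) := by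
    rw [← map_add]; exact congrArg Pi hFR
  have hw : Pi (aC1 * (e2 * pm0)) = B (c1 𝕂 qe te * cm) * Pi e2 := by
    rw [map_mul, map_mul, hPi, haC1, AlgHom.commutes, hpm0', hpm0, ← hPi, ← hB,
      ← Algebra.commutes ((cm : 𝕂)) (Pi e2), ← mul_assoc, ← map_mul]
  have hw' : Pi (aC2 * (pm0 * e2)) =
      B (c1 𝕂 qe te * cm) * Pi e2 + B ((c2 𝕂 qe te - c1 𝕂 qe te) * cm) * Pi e2 := by
    have step : Pi (aC2 * (pm0 * e2)) = B (c2 𝕂 qe te * cm) * Pi e2 := by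
      rw [map_mul, map_mul, hPi, haC2, AlgHom.commutes, hpm0', hpm0, ← hPi, ← hB,
        ← mul_assoc, ← map_mul]
    rw [step, ← add_mul, ← map_add, show c1 𝕂 qe te * (cm : 𝕂)
      + (c2 𝕂 qe te - c1 𝕂 qe te) * (cm : 𝕂) = c2 𝕂 qe te * (cm : 𝕂) by ring]
  have heq2 : Pi (e3 * pm1) + (B (c1 𝕂 qe te * cm) * Pi e2
      + B ((c2 𝕂 qe te - c1 𝕂 qe te) * cm) * Pi e2)
      = Pi (pm1 * e3) + B (c1 𝕂 qe te * cm) * Pi e2 := by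
    rw [← hw', ← hw, ← hπL, ← hπR, hrel]
    abel
  rw [← add_assoc] at heq2
  have hv : B ((c2 𝕂 qe te - c1 𝕂 qe te) * cm) * Pi e2 ∈ A :=
    extract ℓ cp cm A heq2 (by rw [map_mul]; exact A.mul_mem hm h1)
      (by rw [map_mul]; exact A.mul_mem h1 hm)
  exact alg_cancel ℓ cp cm A (mul_ne_zero cdiff_ne cm.ne_zero) hv

lemma up_f (A : Subalgebra 𝕂 (QT 𝕂 qe te ℓ cp cm))
    (h1 : π 𝕂 qe te ℓ cp cm (FreeAlgebra.ι 𝕂 (Gen.pp 1)) ∈ A) (m : ℤ)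
    (hm : π 𝕂 qe te ℓ cp cm (fF 𝕂 ℓ m) ∈ A) :
    π 𝕂 qe te ℓ cp cm (fF 𝕂 ℓ (m + 1)) ∈ A := by
  have hrel := congrArg (RingQuot.mkAlgHom 𝕂 (SRel 𝕂 qe te ℓ cp cm))
    (RingQuot.mkAlgHom_rel 𝕂 (@Rel.pf 𝕂 _ qe te ℓ (-2) m))
  have e1 : pP 𝕂 ℓ (-2 + 3) = FreeAlgebra.ι 𝕂 (Gen.pp 1) := by norm_num [pP]
  have e2 : pP 𝕂 ℓ (-2 + 2) = FreeAlgebra.ι 𝕂 (Gen.pp 0) := by norm_num [pP]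
  have e3 : pP 𝕂 ℓ (-2 + 1) = 0 := by norm_num [pP]
  have e4 : pP 𝕂 ℓ (-2 : ℤ) = 0 := by norm_num [pP]
  rw [e1, e2, e3, e4] at hrel
  simp only [π_apply] at hrel
  simp only [F_smul_def, zero_mul, mul_zero, add_zero, sub_zero] at hrel
  set B := algebraMap 𝕂 (QT 𝕂 qe te ℓ cp cm) with hB
  set Pi := π 𝕂 qe te ℓ cp cm with hPi
  set pp1 := FreeAlgebra.ι 𝕂 (Gen.pp 1 : Gen ℓ) with hpp1
  set pp0 := FreeAlgebra.ι 𝕂 (Gen.pp 0 : Gen ℓ) with hpp0'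
  set fm := fF 𝕂 ℓ m with hfm
  set f1' := fF 𝕂 ℓ (m + 1) with hf1'
  set aC1 := algebraMap 𝕂 (F 𝕂 ℓ) (c1 𝕂 qe te) with haC1
  set aC2 := algebraMap 𝕂 (F 𝕂 ℓ) (c2 𝕂 qe te) with haC2
  -- hrel : Pi (pp1 * fm - aC2 * (pp0 * f1')) = Pi (fm * pp1 - aC1 * (f1' * pp0))
  have hFL : (pp1 * fm - aC2 * (pp0 * f1')) + aC2 * (pp0 * f1') = pp1 * fm := by
    rw [sub_add_cancel]
  have hFR : (fm * pp1 - aC1 * (f1' * pp0)) + aC1 * (f1' * pp0) = fm * pp1 := by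
    rw [sub_add_cancel]
  have hπL : Pi (pp1 * fm - aC2 * (pp0 * f1')) + Pi (aC2 * (pp0 * f1')) = Pi (pp1 * fm) := by
    rw [← map_add]; exact congrArg Pi hFL
  have hπR : Pi (fm * pp1 - aC1 * (f1' * pp0)) + Pi (aC1 * (f1' * pp0)) = Pi (fm * pp1) := by
    rw [← map_add]; exact congrArg Pi hFR
  have hw : Pi (aC1 * (f1' * pp0)) = B (c1 𝕂 qe te * cp) * Pi f1' := by
    rw [map_mul, map_mul, hPi, haC1, AlgHom.commutes, hpp0', hpp0, ← hPi, ← hB,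
      ← Algebra.commutes ((cp : 𝕂)) (Pi f1'), ← mul_assoc, ← map_mul]
  have hw' : Pi (aC2 * (pp0 * f1')) =
      B (c1 𝕂 qe te * cp) * Pi f1' + B ((c2 𝕂 qe te - c1 𝕂 qe te) * cp) * Pi f1' := by
    have step : Pi (aC2 * (pp0 * f1')) = B (c2 𝕂 qe te * cp) * Pi f1' := by
      rw [map_mul, map_mul, hPi, haC2, AlgHom.commutes, hpp0', hpp0, ← hPi, ← hB,
        ← mul_assoc, ← map_mul]
    rw [step, ← add_mul, ← map_add, show c1 𝕂 qe te * (cp : 𝕂)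
      + (c2 𝕂 qe te - c1 𝕂 qe te) * (cp : 𝕂) = c2 𝕂 qe te * (cp : 𝕂) by ring]
  have heq2 : Pi (fm * pp1) + (B (c1 𝕂 qe te * cp) * Pi f1'
      + B ((c2 𝕂 qe te - c1 𝕂 qe te) * cp) * Pi f1')
      = Pi (pp1 * fm) + B (c1 𝕂 qe te * cp) * Pi f1' := by
    rw [← hw', ← hw, ← hπL, ← hπR, hrel]
    abel
  rw [← add_assoc] at heq2
  have hv : B ((c2 𝕂 qe te - c1 𝕂 qe te) * cp) * Pi f1' ∈ A :=
    extract ℓ cp cm A heq2 (by rw [map_mul]; exact A.mul_mem hm h1)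
      (by rw [map_mul]; exact A.mul_mem h1 hm)
  exact alg_cancel ℓ cp cm A (mul_ne_zero cdiff_ne cp.ne_zero) hv

lemma down_f (A : Subalgebra 𝕂 (QT 𝕂 qe te ℓ cp cm))
    (h1 : π 𝕂 qe te ℓ cp cm (FreeAlgebra.ι 𝕂 (Gen.pm 1)) ∈ A) (m : ℤ)
    (hm : π 𝕂 qe te ℓ cp cm (fF 𝕂 ℓ (m + 1)) ∈ A) :
    π 𝕂 qe te ℓ cp cm (fF 𝕂 ℓ m) ∈ A := by
  have hrel := congrArg (RingQuot.mkAlgHom 𝕂 (SRel 𝕂 qe te ℓ cp cm))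
    (RingQuot.mkAlgHom_rel 𝕂 (@Rel.mf 𝕂 _ qe te ℓ ((ℓ : ℤ) - 1) (m - 2)))
  have g1 : pM 𝕂 ℓ ((ℓ : ℤ) - 1 + 3) = 0 := by unfold pM; rw [if_neg (by omega)]
  have g2 : pM 𝕂 ℓ ((ℓ : ℤ) - 1 + 2) = 0 := by unfold pM; rw [if_neg (by omega)]
  have g3 : pM 𝕂 ℓ ((ℓ : ℤ) - 1 + 1) = FreeAlgebra.ι 𝕂 (Gen.pm 0) := by
    unfold pM
    rw [if_pos (by omega), show ((ℓ : ℤ) - ((ℓ : ℤ) - 1 + 1)).toNat = 0 from by omega]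
  have g4 : pM 𝕂 ℓ ((ℓ : ℤ) - 1) = FreeAlgebra.ι 𝕂 (Gen.pm 1) := by
    unfold pM
    rw [if_pos (by omega), show ((ℓ : ℤ) - ((ℓ : ℤ) - 1)).toNat = 1 from by omega]
  have ec : fF 𝕂 ℓ (m - 2 + 2) = fF 𝕂 ℓ m := congrArg (fF 𝕂 ℓ) (by ring)
  have ed : fF 𝕂 ℓ (m - 2 + 3) = fF 𝕂 ℓ (m + 1) := congrArg (fF 𝕂 ℓ) (by ring)
  rw [g1, g2, g3, g4, ec, ed] at hrel
  simp only [π_apply] at hrel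
  simp only [F_smul_def, zero_mul, mul_zero, sub_zero, zero_add, add_zero] at hrel
  set B := algebraMap 𝕂 (QT 𝕂 qe te ℓ cp cm) with hB
  set Pi := π 𝕂 qe te ℓ cp cm with hPi
  set pm1 := FreeAlgebra.ι 𝕂 (Gen.pm 1 : Gen ℓ) with hpm1'
  set pm0 := FreeAlgebra.ι 𝕂 (Gen.pm 0 : Gen ℓ) with hpm0'
  set f2 := fF 𝕂 ℓ m with hf2
  set f3 := fF 𝕂 ℓ (m + 1) with hf3
  set aC1 := algebraMap 𝕂 (F 𝕂 ℓ) (c1 𝕂 qe te) with haC1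
  set aC2 := algebraMap 𝕂 (F 𝕂 ℓ) (c2 𝕂 qe te) with haC2
  -- hrel : Pi (aC1 * (pm0 * f2) - pm1 * f3) = Pi (aC2 * (f2 * pm0) - f3 * pm1)
  have hFL : (aC1 * (pm0 * f2) - pm1 * f3) + pm1 * f3 = aC1 * (pm0 * f2) := by
    rw [sub_add_cancel]
  have hFR : (aC2 * (f2 * pm0) - f3 * pm1) + f3 * pm1 = aC2 * (f2 * pm0) := by
    rw [sub_add_cancel]
  have hπL : Pi (aC1 * (pm0 * f2) - pm1 * f3) + Pi (pm1 * f3) = Pi (aC1 * (pm0 * f2)) := by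
    rw [← map_add]; exact congrArg Pi hFL
  have hπR : Pi (aC2 * (f2 * pm0) - f3 * pm1) + Pi (f3 * pm1) = Pi (aC2 * (f2 * pm0)) := by
    rw [← map_add]; exact congrArg Pi hFR
  have hw : Pi (aC1 * (pm0 * f2)) = B (c1 𝕂 qe te * cm) * Pi f2 := by
    rw [map_mul, map_mul, hPi, haC1, AlgHom.commutes, hpm0', hpm0, ← hPi, ← hB,
      ← mul_assoc, ← map_mul]
  have hw' : Pi (aC2 * (f2 * pm0)) =
      B (c1 𝕂 qe te * cm) * Pi f2 + B ((c2 𝕂 qe te - c1 𝕂 qe te) * cm) * Pi f2 := by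
    have step : Pi (aC2 * (f2 * pm0)) = B (c2 𝕂 qe te * cm) * Pi f2 := by
      rw [map_mul, map_mul, hPi, haC2, AlgHom.commutes, hpm0', hpm0, ← hPi, ← hB,
        ← Algebra.commutes ((cm : 𝕂)) (Pi f2), ← mul_assoc, ← map_mul]
    rw [step, ← add_mul, ← map_add, show c1 𝕂 qe te * (cm : 𝕂)
      + (c2 𝕂 qe te - c1 𝕂 qe te) * (cm : 𝕂) = c2 𝕂 qe te * (cm : 𝕂) by ring]
  have heq2 : Pi (pm1 * f3) + (B (c1 𝕂 qe te * cm) * Pi f2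
      + B ((c2 𝕂 qe te - c1 𝕂 qe te) * cm) * Pi f2)
      = Pi (f3 * pm1) + B (c1 𝕂 qe te * cm) * Pi f2 := by
    rw [← hw', ← hw, ← hπL, ← hπR, hrel]
    abel
  rw [← add_assoc] at heq2
  have hv : B ((c2 𝕂 qe te - c1 𝕂 qe te) * cm) * Pi f2 ∈ A :=
    extract ℓ cp cm A heq2 (by rw [map_mul]; exact A.mul_mem h1 hm)
      (by rw [map_mul]; exact A.mul_mem hm h1)
  exact alg_cancel ℓ cp cm A (mul_ne_zero cdiff_ne cm.ne_zero) hv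


/--
For `ℓ ≥ 0` and `c₊, c₋ ∈ 𝕂^×`, the quotient of the shifted quantum
toroidal algebra `U^ℓ_{q,t}(gl̈_1)` by the two-sided ideal generated by `ψ⁺_0 − c₊` and
`ψ⁻_ℓ − c₋` is generated as a `𝕂`-algebra by the images of `e_0`, `f_0`, the `ψ⁺_s`
(`s ≥ 0`), the `ψ⁻_s` (`s ≤ ℓ`), and `(ψ⁺_0)⁻¹`, `(ψ⁻_ℓ)⁻¹`.
-/
theorem statement_15 (ℓ : ℕ) (cp cm : 𝕂ˣ) :
    Algebra.adjoin 𝕂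
      ({π 𝕂 qe te ℓ cp cm (eF 𝕂 ℓ 0), π 𝕂 qe te ℓ cp cm (fF 𝕂 ℓ 0),
        π 𝕂 qe te ℓ cp cm (FreeAlgebra.ι 𝕂 (Gen.ppi : Gen ℓ)),
        π 𝕂 qe te ℓ cp cm (FreeAlgebra.ι 𝕂 (Gen.pmi : Gen ℓ))} ∪
        Set.range (fun s : ℕ => π 𝕂 qe te ℓ cp cm (FreeAlgebra.ι 𝕂 (Gen.pp s))) ∪
        Set.range (fun j : ℕ => π 𝕂 qe te ℓ cp cm (FreeAlgebra.ι 𝕂 (Gen.pm j)))) = ⊤ := by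
  set G : Set (QT 𝕂 qe te ℓ cp cm) :=
      ({π 𝕂 qe te ℓ cp cm (eF 𝕂 ℓ 0), π 𝕂 qe te ℓ cp cm (fF 𝕂 ℓ 0),
        π 𝕂 qe te ℓ cp cm (FreeAlgebra.ι 𝕂 (Gen.ppi : Gen ℓ)),
        π 𝕂 qe te ℓ cp cm (FreeAlgebra.ι 𝕂 (Gen.pmi : Gen ℓ))} ∪
        Set.range (fun s : ℕ => π 𝕂 qe te ℓ cp cm (FreeAlgebra.ι 𝕂 (Gen.pp s))) ∪
        Set.range (fun j : ℕ => π 𝕂 qe te ℓ cp cm (FreeAlgebra.ι 𝕂 (Gen.pm j)))) with hG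
  set A := Algebra.adjoin 𝕂 G with hA
  -- basic memberships
  have hpp : ∀ s : ℕ, π 𝕂 qe te ℓ cp cm (FreeAlgebra.ι 𝕂 (Gen.pp s)) ∈ A := fun s =>
    Algebra.subset_adjoin (Set.mem_union_left _ (Set.mem_union_right _ ⟨s, rfl⟩))
  have hpm : ∀ j : ℕ, π 𝕂 qe te ℓ cp cm (FreeAlgebra.ι 𝕂 (Gen.pm j)) ∈ A := fun j =>
    Algebra.subset_adjoin (Set.mem_union_right _ ⟨j, rfl⟩)
  have he0 : π 𝕂 qe te ℓ cp cm (eF 𝕂 ℓ 0) ∈ A :=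
    Algebra.subset_adjoin (Set.mem_union_left _ (Set.mem_union_left _ (Set.mem_insert _ _)))
  have hf0 : π 𝕂 qe te ℓ cp cm (fF 𝕂 ℓ 0) ∈ A :=
    Algebra.subset_adjoin (Set.mem_union_left _ (Set.mem_union_left _
      (Set.mem_insert_of_mem _ (Set.mem_insert _ _))))
  have hppi : π 𝕂 qe te ℓ cp cm (FreeAlgebra.ι 𝕂 (Gen.ppi : Gen ℓ)) ∈ A :=
    Algebra.subset_adjoin (Set.mem_union_left _ (Set.mem_union_left _
      (Set.mem_insert_of_mem _ (Set.mem_insert_of_mem _ (Set.mem_insert _ _)))))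
  have hpmi : π 𝕂 qe te ℓ cp cm (FreeAlgebra.ι 𝕂 (Gen.pmi : Gen ℓ)) ∈ A :=
    Algebra.subset_adjoin (Set.mem_union_left _ (Set.mem_union_left _
      (Set.mem_insert_of_mem _ (Set.mem_insert_of_mem _
        (Set.mem_insert_of_mem _ (Set.mem_singleton _))))))
  -- all modes of e and f
  have he : ∀ r : ℤ, π 𝕂 qe te ℓ cp cm (eF 𝕂 ℓ r) ∈ A := by
    intro r
    induction r using Int.induction_on with
    | zero => exact he0
    | succ i ih => exact up_e ℓ cp cm A (hpp 1) (i : ℤ) ih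
    | pred i ih =>
        refine down_e ℓ cp cm A (hpm 1) (-(i : ℤ) - 1) ?_
        rw [show eF 𝕂 ℓ (-(i : ℤ) - 1 + 1) = eF 𝕂 ℓ (-(i : ℤ)) from
          congrArg (eF 𝕂 ℓ) (by ring)]
        exact ih
  have hf : ∀ r : ℤ, π 𝕂 qe te ℓ cp cm (fF 𝕂 ℓ r) ∈ A := by
    intro r
    induction r using Int.induction_on with
    | zero => exact hf0
    | succ i ih => exact up_f ℓ cp cm A (hpp 1) (i : ℤ) ih
    | pred i ih =>
        refine down_f ℓ cp cm A (hpm 1) (-(i : ℤ) - 1) ?_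
        rw [show fF 𝕂 ℓ (-(i : ℤ) - 1 + 1) = fF 𝕂 ℓ (-(i : ℤ)) from
          congrArg (fF 𝕂 ℓ) (by ring)]
        exact ih
  -- surjectivity of π
  have hsurj : Function.Surjective (π 𝕂 qe te ℓ cp cm) := by
    intro x
    obtain ⟨y, hy⟩ := RingQuot.mkAlgHom_surjective 𝕂 (SRel 𝕂 qe te ℓ cp cm) x
    obtain ⟨z, hz⟩ := RingQuot.mkAlgHom_surjective 𝕂 (Rel 𝕂 qe te ℓ) y
    exact ⟨z, by rw [← π_apply, hz, hy]⟩
  rw [hA, eq_top_iff]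
  rintro x -
  obtain ⟨y, rfl⟩ := hsurj x
  induction y using FreeAlgebra.induction with
  | grade0 a =>
      rw [AlgHom.commutes]
      exact Subalgebra.algebraMap_mem _ a
  | grade1 g =>
      cases g with
      | e r => exact he r
      | f r => exact hf r
      | pp s => exact hpp s
      | pm j => exact hpm j
      | ppi => exact hppi
      | pmi => exact hpmi
  | mul a b ha hb =>
      rw [map_mul]
      exact mul_mem ha hb
  | add a b ha hb =>
      rw [map_add]
      exact add_mem ha hb


end Statement15
end
end
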